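/- arXiv:1305.3102 — 3 statements merged into one kernel-verified Lean document; each statement's English description precedes it below -/
import Mathlib

section
/- In the graph 𝕋̃^s inflated by k with the clique of copies of each leaf x^i replaced by a graph G_i joined completely to the copies of the parent y^i (the cross-composed graph G'), if some G_i has pathwidth at most k − 2 and every G_j admits a path decomposition of width at most k − 1, then pw(G') ≤ k(s+2) − 2. -/
open SimpleGraph

/-- A path decomposition of a graph `G`: a finite sequence of bags covering all
vertices and edges, in which each vertex occurs in a consecutive set of bags. -/
structure PathDecomp {V : Type*} (G : SimpleGraph V) where
  n : ℕ
  bag : Fin n → Finset V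
  mem_bag : ∀ v : V, ∃ i, v ∈ bag i
  adj_bag : ∀ u v : V, G.Adj u v → ∃ i, u ∈ bag i ∧ v ∈ bag i
  convex : ∀ v : V, ∀ i j l : Fin n, i ≤ j → j ≤ l → v ∈ bag i → v ∈ bag l → v ∈ bag j

/-- The width of a path decomposition: maximum bag size minus one. -/
def PathDecomp.width {V : Type*} {G : SimpleGraph V} (P : PathDecomp G) : ℕ :=
  (Finset.univ.sup fun i => (P.bag i).card) - 1

/-- Pathwidth: the minimum width over all path decompositions. -/
noncomputable def pathwidth {V : Type*} (G : SimpleGraph V) : ℕ :=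
  sInf {w | ∃ P : PathDecomp G, P.width = w}

/-- The inflation `G ⋄ k`: each vertex is replaced by a `k`-clique, with complete
connections between the cliques of adjacent vertices. -/
def inflate {V : Type*} (G : SimpleGraph V) (k : ℕ) : SimpleGraph (V × Fin k) :=
  SimpleGraph.fromRel fun x y => x.1 = y.1 ∨ G.Adj x.1 y.1


/-- Addresses of vertices of the complete ternary tree `𝕋^s` of height `s`. -/
def TreeVert (s : ℕ) : Type := {l : List (Fin 3) // l.length ≤ s}

/-- Addresses of the leaves of `𝕋^s` (equivalently, indices of the pendant
leaves `x^i` of `𝕋̃^s`, whose parents `y^i` are the leaves of `𝕋^s`). -/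
def LeafIdx (s : ℕ) : Type := {l : List (Fin 3) // l.length = s}

/-- The cross-composed graph `G'`: the inflation of `𝕋̃^s` by `k` in which, for
each pendant leaf `x^i`, the `k`-clique of copies of `x^i` is replaced by the
input graph `G_i`, completely joined to the `k` copies of the parent `y^i`.
The remaining tree part is the inflation of `𝕋^s` by `k`. -/
def crossComposed (s k : ℕ) {U : Type} (G : LeafIdx s → SimpleGraph U) :
    SimpleGraph ((TreeVert s × Fin k) ⊕ (LeafIdx s × U)) :=
  SimpleGraph.fromRel fun x y =>
    (∃ p q : TreeVert s × Fin k, x = Sum.inl p ∧ y = Sum.inl q ∧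
      (p.1.1 = q.1.1 ∨ ∃ a : Fin 3, q.1.1 = p.1.1 ++ [a])) ∨
    (∃ (l : LeafIdx s) (u u' : U), x = Sum.inr (l, u) ∧ y = Sum.inr (l, u') ∧
      (G l).Adj u u') ∨
    (∃ (l : LeafIdx s) (u : U) (q : TreeVert s × Fin k),
      x = Sum.inr (l, u) ∧ y = Sum.inl q ∧ q.1.1 = l.1)


namespace CCPW

variable {α : Type*}

/-- Convexity of occurrences of `v` in a list of finsets. -/
def IsConv (L : List (Finset α)) (v : α) : Prop :=
  ∀ a b c : ℕ, a ≤ b → b ≤ c → c < L.length →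
    v ∈ L.getD a ∅ → v ∈ L.getD c ∅ → v ∈ L.getD b ∅

def MemL (L : List (Finset α)) (v : α) : Prop := ∃ b ∈ L, v ∈ b

lemma memL_iff_getD {L : List (Finset α)} {v : α} :
    MemL L v ↔ ∃ i, i < L.length ∧ v ∈ L.getD i ∅ := by
  constructor
  · rintro ⟨b, hb, hv⟩
    obtain ⟨i, hi, rfl⟩ := List.mem_iff_get.1 hb
    exact ⟨i, i.2, by rw [List.getD_eq_getElem _ _ i.2]; simpa using hv⟩
  · rintro ⟨i, hi, hv⟩
    exact ⟨L.getD i ∅, by rw [List.getD_eq_getElem _ _ hi]; exact List.get_mem L ⟨i, hi⟩, hv⟩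

lemma isConv_of_allmem {L : List (Finset α)} {v : α} (h : ∀ b ∈ L, v ∈ b) :
    IsConv L v := by
  intro a b c hab hbc hc _ _
  have hb : b < L.length := lt_of_le_of_lt hbc hc
  rw [List.getD_eq_getElem _ _ hb]
  exact h _ (List.get_mem L ⟨b, hb⟩)

lemma isConv_of_notmem {L : List (Finset α)} {v : α} (h : ∀ b ∈ L, v ∉ b) :
    IsConv L v := by
  intro a b c hab hbc hc hva _
  have ha : a < L.length := lt_of_le_of_lt (le_trans hab hbc) hc
  rw [List.getD_eq_getElem _ _ ha] at hva
  exact absurd hva (h _ (List.get_mem L ⟨a, ha⟩))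

lemma isConv_singleton (b : Finset α) (v : α) : IsConv [b] v := by
  intro x y z hxy hyz hz hv _
  simp only [List.length_singleton] at hz
  have : y = 0 := by omega
  have hx : x = 0 := by omega
  subst this; subst hx; exact hv

lemma isConv_append {L1 L2 : List (Finset α)} {v : α}
    (h1 : IsConv L1 v) (h2 : IsConv L2 v)
    (hb : MemL L1 v → MemL L2 v →
      (v ∈ L1.getD (L1.length - 1) ∅ ∧ v ∈ L2.getD 0 ∅)) :
    IsConv (L1 ++ L2) v := by
  intro a b c hab hbc hc hva hvc
  rw [List.length_append] at hc
  have getDa : ∀ i, i < L1.length → (L1 ++ L2).getD i ∅ = L1.getD i ∅ := by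
    intro i hi
    rw [List.getD_eq_getElem _ _ (by rw [List.length_append]; omega),
        List.getD_eq_getElem _ _ hi]
    exact List.getElem_append_left hi
  have getDb : ∀ i, L1.length ≤ i → i < L1.length + L2.length →
      (L1 ++ L2).getD i ∅ = L2.getD (i - L1.length) ∅ := by
    intro i hi hi2
    rw [List.getD_eq_getElem _ _ (by rw [List.length_append]; omega),
        List.getD_eq_getElem _ _ (by omega)]
    exact List.getElem_append_right (by omega)
  by_cases hbL : b < L1.length
  · -- b in L1
    have haL : a < L1.length := lt_of_le_of_lt hab hbL
    rw [getDa a haL] at hva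
    rw [getDa b hbL]
    by_cases hcL : c < L1.length
    · rw [getDa c hcL] at hvc
      exact h1 a b c hab hbc hcL hva hvc
    · push_neg at hcL
      rw [getDb c hcL (by omega)] at hvc
      have hmem2 : MemL L2 v := memL_iff_getD.2 ⟨c - L1.length, by omega, hvc⟩
      have hmem1 : MemL L1 v := memL_iff_getD.2 ⟨a, haL, hva⟩
      obtain ⟨hlast, _⟩ := hb hmem1 hmem2
      have hL1pos : 0 < L1.length := lt_of_le_of_lt (Nat.zero_le a) haL
      exact h1 a b (L1.length - 1) hab (by omega) (by omega) hva hlast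
  · push_neg at hbL
    have hcL : L1.length ≤ c := le_trans hbL hbc
    rw [getDb b hbL (by omega), ]
    rw [getDb c hcL (by omega)] at hvc
    by_cases haL : a < L1.length
    · rw [getDa a haL] at hva
      have hmem2 : MemL L2 v := memL_iff_getD.2 ⟨c - L1.length, by omega, hvc⟩
      have hmem1 : MemL L1 v := memL_iff_getD.2 ⟨a, haL, hva⟩
      obtain ⟨_, hhead⟩ := hb hmem1 hmem2
      exact h2 0 (b - L1.length) (c - L1.length) (by omega) (by omega) (by omega) hhead hvc
    · push_neg at haL
      rw [getDb a haL (by omega)] at hva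
      exact h2 (a - L1.length) (b - L1.length) (c - L1.length) (by omega) (by omega) (by omega) hva hvc

lemma isConv_map_union [DecidableEq α] {L : List (Finset α)} {v : α} (S : Finset α)
    (h : IsConv L v) : IsConv (L.map (· ∪ S)) v := by
  by_cases hvS : v ∈ S
  · refine isConv_of_allmem ?_
    intro b hb
    obtain ⟨x, _, rfl⟩ := List.mem_map.1 hb
    exact Finset.mem_union_right _ hvS
  · intro a b c hab hbc hc hva hvc
    rw [List.length_map] at hc
    have key : ∀ i, i < L.length → ((L.map (· ∪ S)).getD i ∅ = L.getD i ∅ ∪ S) := by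
      intro i hi
      rw [List.getD_eq_getElem _ _ (by simpa using hi), List.getD_eq_getElem _ _ hi, List.getElem_map]
    rw [key a (by omega)] at hva
    rw [key c (by omega)] at hvc
    rw [key b (by omega)]
    have hva' : v ∈ L.getD a ∅ := by
      rcases Finset.mem_union.1 hva with h' | h'
      · exact h'
      · exact absurd h' hvS
    have hvc' : v ∈ L.getD c ∅ := by
      rcases Finset.mem_union.1 hvc with h' | h'
      · exact h'
      · exact absurd h' hvS
    exact Finset.mem_union_left _ (h a b c hab hbc hc hva' hvc')

lemma isConv_reverse {L : List (Finset α)} {v : α} (h : IsConv L v) :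
    IsConv L.reverse v := by
  intro a b c hab hbc hc hva hvc
  rw [List.length_reverse] at hc
  have key : ∀ i, i < L.length → (L.reverse.getD i ∅ = L.getD (L.length - 1 - i) ∅) := by
    intro i hi
    rw [List.getD_eq_getElem _ _ (by simpa using hi),
        List.getD_eq_getElem _ _ (by omega)]
    exact List.getElem_reverse _
  rw [key a (by omega)] at hva
  rw [key c (by omega)] at hvc
  rw [key b (by omega)]
  exact h (L.length - 1 - c) (L.length - 1 - b) (L.length - 1 - a)
    (by omega) (by omega) (by omega) hvc hva

lemma memL_append {L1 L2 : List (Finset α)} {v : α} :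
    MemL (L1 ++ L2) v ↔ MemL L1 v ∨ MemL L2 v := by
  simp [MemL, List.mem_append]
  aesop

lemma memL_reverse {L : List (Finset α)} {v : α} :
    MemL L.reverse v ↔ MemL L v := by
  simp [MemL]

lemma memL_map_union [DecidableEq α] {L : List (Finset α)} {v : α} {S : Finset α} :
    MemL (L.map (· ∪ S)) v ↔ (L ≠ [] ∧ v ∈ S) ∨ MemL L v := by
  constructor
  · rintro ⟨b, hb, hv⟩
    obtain ⟨x, hx, rfl⟩ := List.mem_map.1 hb
    rcases Finset.mem_union.1 hv with h | h
    · exact Or.inr ⟨x, hx, h⟩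
    · exact Or.inl ⟨List.ne_nil_of_mem hx, h⟩
  · rintro (⟨hne, hv⟩ | ⟨b, hb, hv⟩)
    · obtain ⟨b, hb⟩ := List.exists_mem_of_ne_nil L hne
      exact ⟨b ∪ S, List.mem_map.2 ⟨b, hb, rfl⟩, Finset.mem_union_right _ hv⟩
    · exact ⟨b ∪ S, List.mem_map.2 ⟨b, hb, rfl⟩, Finset.mem_union_left _ hv⟩








attribute [local instance] Classical.propDecidable

abbrev VT (s k : ℕ) (U : Type) := (TreeVert s × Fin k) ⊕ (LeafIdx s × U)

variable (s k : ℕ) (U : Type)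

noncomputable def tc (l : List (Fin 3)) : Finset (VT s k U) :=
  if h : l.length ≤ s then
    Finset.univ.image (fun c : Fin k => Sum.inl ((⟨l, h⟩ : TreeVert s), c))
  else ∅

variable {U} {G : LeafIdx s → SimpleGraph U}

noncomputable def win (Q : ∀ j : LeafIdx s, PathDecomp (G j)) (l : List (Fin 3)) :
    List (Finset (VT s k U)) :=
  if h : l.length = s then
    tc s k U l :: List.ofFn (fun t : Fin ((Q ⟨l, h⟩).n) =>
      tc s k U l ∪ ((Q ⟨l, h⟩).bag t).image (fun u => Sum.inr ((⟨l, h⟩ : LeafIdx s), u)))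
  else []

noncomputable def Fd (Q : ∀ j : LeafIdx s, PathDecomp (G j)) :
    ℕ → List (Fin 3) → List (Finset (VT s k U))
  | 0, l => win s k Q l
  | m+1, l => ((Fd Q m (l ++ [0]) ++ Fd Q m (l ++ [1])) ++ Fd Q m (l ++ [2])).map
      (· ∪ tc s k U l)

noncomputable def descL (Q : ∀ j : LeafIdx s, PathDecomp (G j)) :
    ℕ → List (Fin 3) → List (Finset (VT s k U))
  | 0, q => win s k Q q
  | m+1, q => descL Q m (q ++ [0]) ++ ([tc s k U (q ++ [0]) ∪ tc s k U q] ++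
      ((Fd s k Q m (q ++ [1]) ++ Fd s k Q m (q ++ [2])).map (· ∪ tc s k U q)))

noncomputable def Dm (Q : ∀ j : LeafIdx s, PathDecomp (G j)) (i : LeafIdx s) :
    ℕ → List (Finset (VT s k U))
  | 0 => win s k Q i.1
  | m+1 =>
    let p := i.1.take (s - m - 1)
    let c := i.1.getD (s - m - 1) 0
    let a : Fin 3 := if c = 0 then 1 else 0
    let b : Fin 3 := if c = 2 then 1 else 2
    descL s k Q m (p ++ [a]) ++ ([tc s k U (p ++ [a]) ∪ tc s k U p] ++
      ((Dm Q i m).map (· ∪ tc s k U p) ++ ([tc s k U p ∪ tc s k U (p ++ [b])] ++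
      (descL s k Q m (p ++ [b])).reverse)))

def under (l : List (Fin 3)) : VT s k U → Prop
  | Sum.inl (x, _) => l <+: x.1
  | Sum.inr (j, _) => l <+: j.1



end CCPW
namespace CCPW

attribute [local instance] Classical.propDecidable

variable {s k : ℕ} {U : Type} {G : LeafIdx s → SimpleGraph U}

/-! ### Basic lemmas about `tc` and `under` -/

lemma mem_tc_iff {l : List (Fin 3)} {v : VT s k U} :
    v ∈ tc s k U l ↔ ∃ (h : l.length ≤ s) (c : Fin k), v = Sum.inl ((⟨l, h⟩ : TreeVert s), c) := by
  unfold tc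
  split
  · next h =>
    simp only [Finset.mem_image, Finset.mem_univ, true_and]
    constructor
    · rintro ⟨c, rfl⟩; exact ⟨h, c, rfl⟩
    · rintro ⟨_, c, rfl⟩; exact ⟨c, rfl⟩
  · next h =>
    simp only [Finset.notMem_empty, false_iff]
    rintro ⟨h', _, _⟩; exact h h'

lemma tc_card {l : List (Fin 3)} : (tc s k U l).card ≤ k := by
  unfold tc
  split
  · exact le_trans (Finset.card_image_le) (by simp)
  · simp

lemma under_of_mem_tc {l l' : List (Fin 3)} {v : VT s k U}
    (hv : v ∈ tc s k U l) (h : l' <+: l) : under s k l' v := by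
  obtain ⟨_, c, rfl⟩ := mem_tc_iff.1 hv
  exact h

lemma mem_tc_self (l : List (Fin 3)) (h : l.length ≤ s) (c : Fin k) :
    (Sum.inl ((⟨l, h⟩ : TreeVert s), c) : VT s k U) ∈ tc s k U l :=
  mem_tc_iff.2 ⟨h, c, rfl⟩

lemma addr_eq_of_mem_tc {l l' : List (Fin 3)} {v : VT s k U}
    (hv : v ∈ tc s k U l) (hv' : v ∈ tc s k U l') : l = l' := by
  obtain ⟨_, c, rfl⟩ := mem_tc_iff.1 hv
  obtain ⟨_, c', he⟩ := mem_tc_iff.1 hv'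
  exact congrArg Subtype.val (Prod.mk.inj (Sum.inl.inj he)).1

/-! ### Prefix facts -/

lemma prefix_snoc_cases {l x : List (Fin 3)} (h : l <+: x) :
    x = l ∨ ∃ d : Fin 3, (l ++ [d]) <+: x := by
  obtain ⟨t, rfl⟩ := h
  cases t with
  | nil => left; simp
  | cons d t' => right; exact ⟨d, ⟨t', by simp⟩⟩

lemma snoc_prefix_inj {l x : List (Fin 3)} {d e : Fin 3}
    (h1 : (l ++ [d]) <+: x) (h2 : (l ++ [e]) <+: x) : d = e := by
  obtain ⟨t1, h1⟩ := h1
  obtain ⟨t2, h2⟩ := h2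
  rw [← h2] at h1
  rw [List.append_assoc, List.append_assoc] at h1
  have := List.append_cancel_left h1
  exact (List.cons.injEq _ _ _ _ ▸ this).1

lemma not_snoc_prefix_self {l : List (Fin 3)} {d : Fin 3} : ¬ ((l ++ [d]) <+: l) := by
  intro h
  have := h.length_le
  simp at this

lemma under_trans {l l' : List (Fin 3)} {v : VT s k U}
    (h : l <+: l') (hv : under s k l' v) : under s k l v := by
  cases v with
  | inl x => exact h.trans hv
  | inr j => exact h.trans hv

lemma under_tc_self {l : List (Fin 3)} {v : VT s k U} (hv : v ∈ tc s k U l) :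
    under s k l v := under_of_mem_tc hv (List.prefix_refl l)

lemma not_under_snoc_of_tc {l : List (Fin 3)} {d : Fin 3} {v : VT s k U}
    (hv : v ∈ tc s k U l) : ¬ under s k (l ++ [d]) v := by
  obtain ⟨_, c, rfl⟩ := mem_tc_iff.1 hv
  exact not_snoc_prefix_self

lemma under_snoc_disjoint {l : List (Fin 3)} {d e : Fin 3} (hde : d ≠ e) {v : VT s k U}
    (h1 : under s k (l ++ [d]) v) (h2 : under s k (l ++ [e]) v) : False := by
  cases v with
  | inl x => exact hde (snoc_prefix_inj h1 h2)
  | inr j => exact hde (snoc_prefix_inj h1 h2)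

lemma under_cases {l : List (Fin 3)} {v : VT s k U} (h : under s k l v) (hs : l.length < s)
    (hne : ∀ (hl : l.length ≤ s) (c : Fin k), v ≠ Sum.inl ((⟨l, hl⟩ : TreeVert s), c)) :
    ∃ d : Fin 3, under s k (l ++ [d]) v := by
  cases v with
  | inl x =>
    rcases prefix_snoc_cases h with heq | ⟨d, hd⟩
    · exfalso
      obtain ⟨⟨lx, hlx⟩, c⟩ := x
      dsimp [under] at heq
      subst heq
      exact hne hlx c rfl
    · exact ⟨d, hd⟩
  | inr j =>
    rcases prefix_snoc_cases h with heq | ⟨d, hd⟩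
    · exfalso
      have hj : j.1.1.length = s := j.1.2
      rw [heq] at hj
      omega
    · exact ⟨d, hd⟩

end CCPW

namespace CCPW

attribute [local instance] Classical.propDecidable

variable {s k : ℕ} {U : Type} {G : LeafIdx s → SimpleGraph U}
variable {Q : ∀ j : LeafIdx s, PathDecomp (G j)}

/-! ### Window lemmas -/

lemma win_unfold (Q : ∀ j : LeafIdx s, PathDecomp (G j)) (j : LeafIdx s) :
    win s k Q j.1 = tc s k U j.1 :: List.ofFn (fun t : Fin ((Q j).n) =>
      tc s k U j.1 ∪ ((Q j).bag t).image (fun u => Sum.inr (j, u))) := by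
  unfold win
  rw [dif_pos j.2]
  rfl


lemma win_ne (j : LeafIdx s) : win s k Q j.1 ≠ [] := by
  rw [win_unfold]
  simp

lemma win_all_tc (j : LeafIdx s) : ∀ b ∈ win s k Q j.1, tc s k U j.1 ⊆ b := by
  rw [win_unfold]
  intro b hb
  rcases List.mem_cons.1 hb with rfl | hb
  · exact subset_rfl
  · obtain ⟨t, rfl⟩ := Set.mem_range.1 ((List.mem_ofFn' _ _).1 hb)
    exact Finset.subset_union_left

lemma win_support (j : LeafIdx s) :
    ∀ b ∈ win s k Q j.1, ∀ v ∈ b, under s k j.1 v := by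
  rw [win_unfold]
  intro b hb v hv
  have htc : ∀ w ∈ tc s k U j.1, under s k j.1 w := fun w hw => under_tc_self hw
  rcases List.mem_cons.1 hb with rfl | hb
  · exact htc v hv
  · obtain ⟨t, rfl⟩ := Set.mem_range.1 ((List.mem_ofFn' _ _).1 hb)
    rcases Finset.mem_union.1 hv with h | h
    · exact htc v h
    · obtain ⟨u, _, rfl⟩ := Finset.mem_image.1 h
      exact List.prefix_refl _

lemma win_card (j : LeafIdx s) (B : ℕ) (hB : ∀ t, ((Q j).bag t).card ≤ B) :
    ∀ b ∈ win s k Q j.1, b.card ≤ k + B := by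
  rw [win_unfold]
  intro b hb
  rcases List.mem_cons.1 hb with rfl | hb
  · exact le_trans tc_card (by omega)
  · obtain ⟨t, rfl⟩ := Set.mem_range.1 ((List.mem_ofFn' _ _).1 hb)
    calc _ ≤ (tc s k U j.1).card + (((Q j).bag t).image (fun u => Sum.inr (j, u))).card :=
          Finset.card_union_le _ _
    _ ≤ k + B := by
        have := Finset.card_image_le (s := (Q j).bag t) (f := fun u => (Sum.inr (j, u) : VT s k U))
        have := hB t
        have := tc_card (s := s) (k := k) (U := U) (l := j.1)
        omega

lemma win_cov_u (j : LeafIdx s) (u : U) :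
    ∃ b ∈ win s k Q j.1, (Sum.inr (j, u) : VT s k U) ∈ b ∧ tc s k U j.1 ⊆ b := by
  obtain ⟨t, ht⟩ := (Q j).mem_bag u
  refine ⟨tc s k U j.1 ∪ ((Q j).bag t).image (fun u => Sum.inr (j, u)), ?_, ?_, ?_⟩
  · rw [win_unfold]
    exact List.mem_cons_of_mem _ ((List.mem_ofFn' _ _).2 ⟨t, rfl⟩)
  · exact Finset.mem_union_right _ (Finset.mem_image.2 ⟨u, ht, rfl⟩)
  · exact Finset.subset_union_left

lemma win_adjG (j : LeafIdx s) (u u' : U) (h : (G j).Adj u u') :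
    ∃ b ∈ win s k Q j.1, (Sum.inr (j, u) : VT s k U) ∈ b ∧ (Sum.inr (j, u') : VT s k U) ∈ b := by
  obtain ⟨t, ht, ht'⟩ := (Q j).adj_bag u u' h
  refine ⟨tc s k U j.1 ∪ ((Q j).bag t).image (fun u => Sum.inr (j, u)), ?_, ?_, ?_⟩
  · rw [win_unfold]
    exact List.mem_cons_of_mem _ ((List.mem_ofFn' _ _).2 ⟨t, rfl⟩)
  · exact Finset.mem_union_right _ (Finset.mem_image.2 ⟨u, ht, rfl⟩)
  · exact Finset.mem_union_right _ (Finset.mem_image.2 ⟨u', ht', rfl⟩)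

lemma win_conv (j : LeafIdx s) (v : VT s k U) : IsConv (win s k Q j.1) v := by
  rw [win_unfold]
  by_cases hvt : v ∈ tc s k U j.1
  · refine isConv_of_allmem ?_
    intro b hb
    rcases List.mem_cons.1 hb with rfl | hb
    · exact hvt
    · obtain ⟨t, rfl⟩ := Set.mem_range.1 ((List.mem_ofFn' _ _).1 hb)
      exact Finset.mem_union_left _ hvt
  by_cases hvu : ∃ u : U, v = Sum.inr (j, u)
  · obtain ⟨u, rfl⟩ := hvu
    intro a b c hab hbc hc hva hvc
    set L := tc s k U j.1 :: List.ofFn (fun t : Fin ((Q j).n) =>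
      tc s k U j.1 ∪ ((Q j).bag t).image (fun u => Sum.inr (j, u))) with hL
    have hlen : L.length = (Q j).n + 1 := by simp [hL]
    have key : ∀ x : ℕ, x < L.length → Sum.inr (j, u) ∈ L.getD x ∅ →
        ∃ (hx : 0 < x) (hx2 : x - 1 < (Q j).n), u ∈ (Q j).bag ⟨x - 1, hx2⟩ := by
      intro x hx hvx
      rw [List.getD_eq_getElem _ _ hx] at hvx
      match x with
      | 0 =>
        exfalso
        simp only [hL, List.getElem_cons_zero] at hvx
        obtain ⟨_, _, h⟩ := mem_tc_iff.1 hvx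
        exact absurd h (by simp)
      | Nat.succ y =>
        have hy : y < (Q j).n := by omega
        refine ⟨Nat.succ_pos y, by omega, ?_⟩
        simp only [hL, List.getElem_cons_succ, List.getElem_ofFn] at hvx
        rcases Finset.mem_union.1 hvx with h | h
        · exact absurd h (by
            intro hmem
            obtain ⟨_, _, hcontra⟩ := mem_tc_iff.1 hmem
            simp at hcontra)
        · obtain ⟨u', hu', he⟩ := Finset.mem_image.1 h
          have : u' = u := by
            simp only [Sum.inr.injEq, Prod.mk.injEq] at he
            exact he.2
          subst this
          exact hu'
    obtain ⟨hapos, ha2, hua⟩ := key a (by omega) hva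
    obtain ⟨hcpos, hc2, huc⟩ := key c hc hvc
    have hb2 : b - 1 < (Q j).n := by omega
    have hub : u ∈ (Q j).bag ⟨b - 1, hb2⟩ :=
      (Q j).convex u ⟨a - 1, ha2⟩ ⟨b - 1, hb2⟩ ⟨c - 1, hc2⟩
        (by simp [Fin.le_def]; omega) (by simp [Fin.le_def]; omega) hua huc
    have hblt : b < L.length := by rw [hlen]; omega
    rw [List.getD_eq_getElem _ _ hblt]
    obtain ⟨y, rfl⟩ : ∃ y, b = y + 1 := ⟨b - 1, by omega⟩
    simp only [hL, List.getElem_cons_succ, List.getElem_ofFn]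
    refine Finset.mem_union_right _ (Finset.mem_image.2 ⟨u, ?_, rfl⟩)
    exact hub
  · refine isConv_of_notmem ?_
    intro b hb hv
    have := win_support (Q := Q) j b (by rwa [win_unfold]) v hv
    cases v with
    | inl x =>
      obtain ⟨⟨lx, hlx⟩, cx⟩ := x
      have hpre : j.1 <+: lx := this
      have hlens : j.1.length = lx.length := by
        have h1 := hpre.length_le
        have h2 := j.2
        omega
      have hlx2 : lx = j.1 := (hpre.eq_of_length hlens).symm
      subst hlx2
      exact hvt (mem_tc_iff.2 ⟨hlx, cx, rfl⟩)
    | inr jr =>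
      obtain ⟨j', u⟩ := jr
      have hj : j.1 <+: j'.1 := this
      have : j' = j := Subtype.ext (List.IsPrefix.eq_of_length hj (by rw [j.2, j'.2]) ).symm
      subst this
      exact hvu ⟨u, rfl⟩

end CCPW

namespace CCPW

attribute [local instance] Classical.propDecidable

variable {s k : ℕ} {U : Type} {G : LeafIdx s → SimpleGraph U}
variable {Q : ∀ j : LeafIdx s, PathDecomp (G j)}

/-! ### Lemmas about `Fd` -/

lemma F_ne : ∀ (m : ℕ) (l : List (Fin 3)), l.length + m = s → Fd s k Q m l ≠ [] := by
  intro m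
  induction m with
  | zero =>
    intro l hl
    exact win_ne ⟨l, by omega⟩
  | succ m ih =>
    intro l hl
    have h0 := ih (l ++ [0]) (by simp; omega)
    simp only [Fd, ne_eq, List.map_eq_nil_iff, List.append_eq_nil_iff]
    tauto

lemma F_all_tc : ∀ (m : ℕ) (l : List (Fin 3)), l.length + m = s →
    ∀ b ∈ Fd s k Q m l, tc s k U l ⊆ b := by
  intro m
  induction m with
  | zero =>
    intro l hl
    exact win_all_tc ⟨l, by omega⟩
  | succ m ih =>
    intro l hl b hb
    obtain ⟨b', _, rfl⟩ := List.mem_map.1 hb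
    exact Finset.subset_union_right

lemma F_support : ∀ (m : ℕ) (l : List (Fin 3)), l.length + m = s →
    ∀ b ∈ Fd s k Q m l, ∀ v ∈ b, under s k l v := by
  intro m
  induction m with
  | zero =>
    intro l hl
    exact win_support ⟨l, by omega⟩
  | succ m ih =>
    intro l hl b hb v hv
    obtain ⟨b', hb', rfl⟩ := List.mem_map.1 hb
    rcases Finset.mem_union.1 hv with h | h
    · rcases List.mem_append.1 hb' with hb'' | hb''
      · rcases List.mem_append.1 hb'' with hb3 | hb3
        · exact under_trans (by simp) (ih (l ++ [0]) (by simp; omega) b' hb3 v h)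
        · exact under_trans (by simp) (ih (l ++ [1]) (by simp; omega) b' hb3 v h)
      · exact under_trans (by simp) (ih (l ++ [2]) (by simp; omega) b' hb'' v h)
    · exact under_tc_self h

lemma memL_F_under {m : ℕ} {l : List (Fin 3)} (hl : l.length + m = s) {v : VT s k U}
    (h : MemL (Fd s k Q m l) v) : under s k l v := by
  obtain ⟨b, hb, hv⟩ := h
  exact F_support m l hl b hb v hv

lemma F_card (hB : ∀ (j : LeafIdx s) t, ((Q j).bag t).card ≤ k) :
    ∀ (m : ℕ) (l : List (Fin 3)), l.length + m = s →
    ∀ b ∈ Fd s k Q m l, b.card ≤ k * (m + 2) := by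
  intro m
  induction m with
  | zero =>
    intro l hl b hb
    have := win_card (Q := Q) ⟨l, by omega⟩ k (hB _) b hb
    omega
  | succ m ih =>
    intro l hl b hb
    obtain ⟨b', hb', rfl⟩ := List.mem_map.1 hb
    have h1 : b'.card ≤ k * (m + 2) := by
      rcases List.mem_append.1 hb' with hb'' | hb''
      · rcases List.mem_append.1 hb'' with hb3 | hb3
        · exact ih (l ++ [0]) (by simp; omega) b' hb3
        · exact ih (l ++ [1]) (by simp; omega) b' hb3
      · exact ih (l ++ [2]) (by simp; omega) b' hb''
    calc (b' ∪ tc s k U l).card ≤ b'.card + (tc s k U l).card := Finset.card_union_le _ _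
    _ ≤ k * (m + 2) + k := by have := tc_card (s := s) (k := k) (U := U) (l := l); omega
    _ ≤ k * (m + 1 + 2) := by ring_nf; omega

lemma F_conv : ∀ (m : ℕ) (l : List (Fin 3)), l.length + m = s →
    ∀ v : VT s k U, IsConv (Fd s k Q m l) v := by
  intro m
  induction m with
  | zero =>
    intro l hl
    exact win_conv ⟨l, by omega⟩
  | succ m ih =>
    intro l hl v
    refine isConv_map_union _ ?_
    have d01 : (0 : Fin 3) ≠ 1 := by decide
    have d02 : (0 : Fin 3) ≠ 2 := by decide
    have d12 : (1 : Fin 3) ≠ 2 := by decide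
    refine isConv_append (isConv_append (ih _ (by simp; omega) v) (ih _ (by simp; omega) v) ?_) (ih _ (by simp; omega) v) ?_
    · intro h1 h2
      exact absurd (memL_F_under (by simp; omega) h2)
        (fun hu => under_snoc_disjoint d01 (memL_F_under (by simp; omega) h1) hu)
    · intro h1 h2
      exfalso
      rcases memL_append.1 h1 with h | h
      · exact under_snoc_disjoint d02 (memL_F_under (by simp; omega) h)
          (memL_F_under (by simp; omega) h2)
      · exact under_snoc_disjoint d12 (memL_F_under (by simp; omega) h)
          (memL_F_under (by simp; omega) h2)

lemma mem_Fd_succ {m : ℕ} {l : List (Fin 3)} {b : Finset (VT s k U)} (d : Fin 3)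
    (hb : b ∈ Fd s k Q m (l ++ [d])) : b ∪ tc s k U l ∈ Fd s k Q (m+1) l := by
  refine List.mem_map.2 ⟨b, ?_, rfl⟩
  fin_cases d
  · exact List.mem_append.2 (Or.inl (List.mem_append.2 (Or.inl hb)))
  · exact List.mem_append.2 (Or.inl (List.mem_append.2 (Or.inr hb)))
  · exact List.mem_append.2 (Or.inr hb)

lemma F_tcx : ∀ (m : ℕ) (l : List (Fin 3)), l.length + m = s →
    ∀ x : List (Fin 3), l <+: x → x.length ≤ s →
    ∃ b ∈ Fd s k Q m l, tc s k U x ⊆ b := by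
  intro m
  induction m with
  | zero =>
    intro l hl x hpre hx
    have : l = x := hpre.eq_of_length (by have := hpre.length_le; omega)
    subst this
    obtain ⟨b, hb⟩ := List.exists_mem_of_ne_nil _ (win_ne (Q := Q) ⟨l, by omega⟩)
    exact ⟨b, hb, win_all_tc ⟨l, by omega⟩ b hb⟩
  | succ m ih =>
    intro l hl x hpre hx
    rcases prefix_snoc_cases hpre with rfl | ⟨d, hd⟩
    · obtain ⟨b, hb⟩ := List.exists_mem_of_ne_nil _ (F_ne (Q := Q) m (x ++ [0]) (by simp; omega))
      exact ⟨b ∪ tc s k U x, mem_Fd_succ 0 hb, Finset.subset_union_right⟩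
    · obtain ⟨b, hb, hsub⟩ := ih (l ++ [d]) (by simp; omega) x hd hx
      exact ⟨b ∪ tc s k U l, mem_Fd_succ d hb, hsub.trans Finset.subset_union_left⟩

lemma F_pair : ∀ (m : ℕ) (l : List (Fin 3)), l.length + m = s →
    ∀ (x : List (Fin 3)) (d : Fin 3), l <+: x → x.length + 1 ≤ s →
    ∃ b ∈ Fd s k Q m l, tc s k U x ⊆ b ∧ tc s k U (x ++ [d]) ⊆ b := by
  intro m
  induction m with
  | zero =>
    intro l hl x d hpre hx
    exact absurd (hpre.length_le) (by omega)
  | succ m ih =>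
    intro l hl x d hpre hx
    rcases prefix_snoc_cases hpre with rfl | ⟨e, he⟩
    · obtain ⟨b, hb, hsub⟩ := F_tcx (Q := Q) m (x ++ [d]) (by simp; omega) (x ++ [d])
        (List.prefix_refl _) (by simp; omega)
      exact ⟨b ∪ tc s k U x, mem_Fd_succ d hb, Finset.subset_union_right,
        hsub.trans Finset.subset_union_left⟩
    · obtain ⟨b, hb, hs1, hs2⟩ := ih (l ++ [e]) (by simp; omega) x d he hx
      exact ⟨b ∪ tc s k U l, mem_Fd_succ e hb, hs1.trans Finset.subset_union_left,
        hs2.trans Finset.subset_union_left⟩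

lemma F_leafu : ∀ (m : ℕ) (l : List (Fin 3)), l.length + m = s →
    ∀ (j : LeafIdx s) (u : U), l <+: j.1 →
    ∃ b ∈ Fd s k Q m l, (Sum.inr (j, u) : VT s k U) ∈ b ∧ tc s k U j.1 ⊆ b := by
  intro m
  induction m with
  | zero =>
    intro l hl j u hpre
    have hlj : l = j.1 := hpre.eq_of_length (by have := j.2; have := hpre.length_le; omega)
    subst hlj
    exact win_cov_u _ u
  | succ m ih =>
    intro l hl j u hpre
    rcases prefix_snoc_cases hpre with heq | ⟨d, hd⟩
    · exfalso; have := j.2; rw [heq] at this; omega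
    · obtain ⟨b, hb, h1, h2⟩ := ih (l ++ [d]) (by simp; omega) j u hd
      exact ⟨b ∪ tc s k U l, mem_Fd_succ d hb, Finset.mem_union_left _ h1,
        h2.trans Finset.subset_union_left⟩

lemma F_adjG : ∀ (m : ℕ) (l : List (Fin 3)), l.length + m = s →
    ∀ (j : LeafIdx s) (u u' : U), l <+: j.1 → (G j).Adj u u' →
    ∃ b ∈ Fd s k Q m l, (Sum.inr (j, u) : VT s k U) ∈ b ∧ (Sum.inr (j, u') : VT s k U) ∈ b := by
  intro m
  induction m with
  | zero =>
    intro l hl j u u' hpre hadj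
    have hlj : l = j.1 := hpre.eq_of_length (by have := j.2; have := hpre.length_le; omega)
    subst hlj
    exact win_adjG _ u u' hadj
  | succ m ih =>
    intro l hl j u u' hpre hadj
    rcases prefix_snoc_cases hpre with heq | ⟨d, hd⟩
    · exfalso; have := j.2; rw [heq] at this; omega
    · obtain ⟨b, hb, h1, h2⟩ := ih (l ++ [d]) (by simp; omega) j u u' hd hadj
      exact ⟨b ∪ tc s k U l, mem_Fd_succ d hb, Finset.mem_union_left _ h1,
        Finset.mem_union_left _ h2⟩

end CCPW

namespace CCPW

attribute [local instance] Classical.propDecidable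

section ListHelpers
variable {α : Type*}

lemma getD_mem {L : List (Finset α)} {i : ℕ} (h : i < L.length) : L.getD i ∅ ∈ L := by
  rw [List.getD_eq_getElem _ _ h]
  exact List.getElem_mem h

lemma headD_append {L1 L2 : List (Finset α)} (h : L1 ≠ []) :
    (L1 ++ L2).getD 0 ∅ = L1.getD 0 ∅ := by
  have h1 : 0 < L1.length := List.length_pos_iff.2 h
  rw [List.getD_eq_getElem _ _ (by simp; omega), List.getD_eq_getElem _ _ h1]
  exact List.getElem_append_left h1

lemma lastD_append {L1 L2 : List (Finset α)} (h : L2 ≠ []) :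
    (L1 ++ L2).getD ((L1 ++ L2).length - 1) ∅ = L2.getD (L2.length - 1) ∅ := by
  have h2 : 0 < L2.length := List.length_pos_iff.2 h
  rw [List.getD_eq_getElem _ _ (by simp; omega), List.getD_eq_getElem _ _ (by omega)]
  have he : (L1 ++ L2).length - 1 - L1.length = L2.length - 1 := by simp; omega
  rw [List.getElem_append_right (by simp; omega)]
  simp only [he]

lemma getD_singleton (b : Finset α) : ([b] : List (Finset α)).getD 0 ∅ = b := rfl

end ListHelpers

variable {s k : ℕ} {U : Type} {G : LeafIdx s → SimpleGraph U}
variable {Q : ∀ j : LeafIdx s, PathDecomp (G j)}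

/-! ### Lemmas about `descL` -/

lemma descL_succ (m : ℕ) (q : List (Fin 3)) :
    descL s k Q (m+1) q = descL s k Q m (q ++ [0]) ++ ([tc s k U (q ++ [0]) ∪ tc s k U q] ++
      ((Fd s k Q m (q ++ [1]) ++ Fd s k Q m (q ++ [2])).map (· ∪ tc s k U q))) := rfl

lemma mem_descL_left {m : ℕ} {q : List (Fin 3)} {b : Finset (VT s k U)}
    (hb : b ∈ descL s k Q m (q ++ [0])) : b ∈ descL s k Q (m+1) q :=
  List.mem_append.2 (Or.inl hb)

lemma mem_descL_trans {m : ℕ} {q : List (Fin 3)} :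
    tc s k U (q ++ [0]) ∪ tc s k U q ∈ descL s k Q (m+1) q :=
  List.mem_append.2 (Or.inr (List.mem_append.2 (Or.inl (List.mem_singleton.2 rfl))))

lemma mem_descL_seg {m : ℕ} {q : List (Fin 3)} {b : Finset (VT s k U)} {d : Fin 3}
    (hd : d = 1 ∨ d = 2) (hb : b ∈ Fd s k Q m (q ++ [d])) :
    b ∪ tc s k U q ∈ descL s k Q (m+1) q := by
  refine List.mem_append.2 (Or.inr (List.mem_append.2 (Or.inr (List.mem_map.2 ⟨b, ?_, rfl⟩))))
  rcases hd with rfl | rfl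
  · exact List.mem_append.2 (Or.inl hb)
  · exact List.mem_append.2 (Or.inr hb)

lemma dL_ne : ∀ (m : ℕ) (q : List (Fin 3)), q.length + m = s → descL s k Q m q ≠ [] := by
  intro m
  induction m with
  | zero => intro q hq; exact win_ne ⟨q, by omega⟩
  | succ m ih =>
    intro q hq
    rw [descL_succ]
    simp only [ne_eq, List.append_eq_nil_iff]
    tauto

lemma dL_support : ∀ (m : ℕ) (q : List (Fin 3)), q.length + m = s →
    ∀ b ∈ descL s k Q m q, ∀ v ∈ b, under s k q v := by
  intro m
  induction m with
  | zero => intro q hq; exact win_support ⟨q, by omega⟩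
  | succ m ih =>
    intro q hq b hb v hv
    rw [descL_succ] at hb
    rcases List.mem_append.1 hb with hb | hb
    · exact under_trans (by simp) (ih (q ++ [0]) (by simp; omega) b hb v hv)
    rcases List.mem_append.1 hb with hb | hb
    · rw [List.mem_singleton.1 hb] at hv
      rcases Finset.mem_union.1 hv with h | h
      · exact under_of_mem_tc h (by simp)
      · exact under_tc_self h
    · obtain ⟨b', hb', rfl⟩ := List.mem_map.1 hb
      rcases Finset.mem_union.1 hv with h | h
      · rcases List.mem_append.1 hb' with hb'' | hb''
        · exact under_trans (by simp) (F_support m (q ++ [1]) (by simp; omega) b' hb'' v h)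
        · exact under_trans (by simp) (F_support m (q ++ [2]) (by simp; omega) b' hb'' v h)
      · exact under_tc_self h

lemma memL_dL_under {m : ℕ} {q : List (Fin 3)} (hq : q.length + m = s) {v : VT s k U}
    (h : MemL (descL s k Q m q) v) : under s k q v := by
  obtain ⟨b, hb, hv⟩ := h
  exact dL_support m q hq b hb v hv

lemma dL_card (hB : ∀ (j : LeafIdx s) t, ((Q j).bag t).card ≤ k) :
    ∀ (m : ℕ) (q : List (Fin 3)), q.length + m = s →
    ∀ b ∈ descL s k Q m q, b.card ≤ k * (m + 2) := by
  intro m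
  induction m with
  | zero =>
    intro q hq b hb
    have := win_card (Q := Q) ⟨q, by omega⟩ k (hB _) b hb
    omega
  | succ m ih =>
    intro q hq b hb
    have htc := tc_card (s := s) (k := k) (U := U) (l := q)
    have htc0 := tc_card (s := s) (k := k) (U := U) (l := q ++ [0])
    rw [descL_succ] at hb
    rcases List.mem_append.1 hb with hb | hb
    · have := ih (q ++ [0]) (by simp; omega) b hb
      nlinarith
    rcases List.mem_append.1 hb with hb | hb
    · rw [List.mem_singleton.1 hb]
      have := Finset.card_union_le (tc s k U (q ++ [0])) (tc s k U q)
      nlinarith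
    · obtain ⟨b', hb', rfl⟩ := List.mem_map.1 hb
      have h1 : b'.card ≤ k * (m + 2) := by
        rcases List.mem_append.1 hb' with hb'' | hb''
        · exact F_card hB m (q ++ [1]) (by simp; omega) b' hb''
        · exact F_card hB m (q ++ [2]) (by simp; omega) b' hb''
      have := Finset.card_union_le b' (tc s k U q)
      nlinarith

lemma dL_last : ∀ (m : ℕ) (q : List (Fin 3)), q.length + m = s →
    tc s k U q ⊆ (descL s k Q m q).getD ((descL s k Q m q).length - 1) ∅ := by
  intro m
  induction m with
  | zero =>
    intro q hq
    have hne : win s k Q q ≠ [] := win_ne (k := k) (Q := Q) ⟨q, by omega⟩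
    have hd0 : descL s k Q 0 q = win s k Q q := rfl
    have hmem : (descL s k Q 0 q).getD ((descL s k Q 0 q).length - 1) ∅ ∈ win s k Q q := by
      rw [hd0]
      exact getD_mem (by have := List.length_pos_iff.2 hne; omega)
    exact win_all_tc ⟨q, by omega⟩ _ hmem
  | succ m ih =>
    intro q hq
    rw [descL_succ]
    have hFne : (Fd s k Q m (q ++ [1]) ++ Fd s k Q m (q ++ [2])).map (· ∪ tc s k U q) ≠ [] := by
      simp only [ne_eq, List.map_eq_nil_iff, List.append_eq_nil_iff]
      intro ⟨h1, _⟩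
      exact F_ne (Q := Q) m (q ++ [1]) (by simp; omega) h1
    rw [lastD_append (by simp only [ne_eq, List.append_eq_nil_iff]; tauto)]
    rw [lastD_append hFne]
    intro v hv
    have hmem := getD_mem (L := (Fd s k Q m (q ++ [1]) ++ Fd s k Q m (q ++ [2])).map (· ∪ tc s k U q))
      (i := ((Fd s k Q m (q ++ [1]) ++ Fd s k Q m (q ++ [2])).map (· ∪ tc s k U q)).length - 1)
      (by have := List.length_pos_iff.2 hFne; omega)
    obtain ⟨b', _, heq⟩ := List.mem_map.1 hmem
    rw [← heq]
    exact Finset.mem_union_right _ hv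

lemma dL_conv : ∀ (m : ℕ) (q : List (Fin 3)), q.length + m = s →
    ∀ v : VT s k U, IsConv (descL s k Q m q) v := by
  intro m
  induction m with
  | zero => intro q hq; exact win_conv ⟨q, by omega⟩
  | succ m ih =>
    intro q hq v
    rw [descL_succ]
    have d12 : (1 : Fin 3) ≠ 2 := by decide
    set segs := (Fd s k Q m (q ++ [1]) ++ Fd s k Q m (q ++ [2])).map (· ∪ tc s k U q) with hsegs
    have hsegsupp : ∀ w : VT s k U, MemL segs w → w ∈ tc s k U q ∨
        under s k (q ++ [1]) w ∨ under s k (q ++ [2]) w := by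
      rintro w ⟨b, hb, hw⟩
      obtain ⟨b', hb', rfl⟩ := List.mem_map.1 hb
      rcases Finset.mem_union.1 hw with h | h
      · rcases List.mem_append.1 hb' with hb'' | hb''
        · exact Or.inr (Or.inl (F_support m (q ++ [1]) (by simp; omega) b' hb'' w h))
        · exact Or.inr (Or.inr (F_support m (q ++ [2]) (by simp; omega) b' hb'' w h))
      · exact Or.inl h
    have hsegconv : IsConv segs v := by
      refine isConv_map_union _ (isConv_append (F_conv m (q ++ [1]) (by simp; omega) v)
        (F_conv m (q ++ [2]) (by simp; omega) v) ?_)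
      intro h1 h2
      exact absurd (memL_F_under (by simp; omega) h2)
        (fun hu => under_snoc_disjoint d12 (memL_F_under (by simp; omega) h1) hu)
    have hsegall : v ∈ tc s k U q → ∀ b ∈ segs, v ∈ b := by
      intro hvq b hb
      obtain ⟨b', _, rfl⟩ := List.mem_map.1 hb
      exact Finset.mem_union_right _ hvq
    have hRconv : IsConv ([tc s k U (q ++ [0]) ∪ tc s k U q] ++ segs) v := by
      refine isConv_append (isConv_singleton _ _) hsegconv ?_
      intro h1 h2
      have hv1 : v ∈ tc s k U (q ++ [0]) ∪ tc s k U q := by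
        obtain ⟨b, hb, hv⟩ := h1
        rwa [List.mem_singleton.1 hb] at hv
      have hvq : v ∈ tc s k U q := by
        rcases Finset.mem_union.1 hv1 with h | h
        · exfalso
          rcases hsegsupp v h2 with h' | h' | h'
          · have := addr_eq_of_mem_tc h h'
            simp at this
          · exact under_snoc_disjoint (by decide : (0 : Fin 3) ≠ 1) (under_tc_self h) h'
          · exact under_snoc_disjoint (by decide : (0 : Fin 3) ≠ 2) (under_tc_self h) h'
        · exact h
      constructor
      · simpa [getD_singleton] using hv1
      · have hsegne : segs ≠ [] := by
          simp only [hsegs, ne_eq, List.map_eq_nil_iff, List.append_eq_nil_iff]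
          intro ⟨hh, _⟩
          exact F_ne (Q := Q) m (q ++ [1]) (by simp; omega) hh
        exact hsegall hvq _ (getD_mem (List.length_pos_iff.2 hsegne))
    refine isConv_append (ih (q ++ [0]) (by simp; omega) v) hRconv ?_
    intro h1 h2
    have hu0 : under s k (q ++ [0]) v := memL_dL_under (by simp; omega) h1
    have hvq0 : v ∈ tc s k U (q ++ [0]) := by
      rcases memL_append.1 h2 with h | h
      · obtain ⟨b, hb, hv⟩ := h
        rw [List.mem_singleton.1 hb] at hv
        rcases Finset.mem_union.1 hv with h' | h'
        · exact h'
        · exact absurd hu0 (not_under_snoc_of_tc h')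
      · exfalso
        rcases hsegsupp v h with h' | h' | h'
        · exact absurd hu0 (not_under_snoc_of_tc h')
        · exact under_snoc_disjoint (by decide : (0 : Fin 3) ≠ 1) hu0 h'
        · exact under_snoc_disjoint (by decide : (0 : Fin 3) ≠ 2) hu0 h'
    constructor
    · exact dL_last m (q ++ [0]) (by simp; omega) hvq0
    · rw [headD_append (by simp), getD_singleton]
      exact Finset.mem_union_left _ hvq0

lemma dL_tcx : ∀ (m : ℕ) (q : List (Fin 3)), q.length + m = s →
    ∀ x : List (Fin 3), q <+: x → x.length ≤ s →
    ∃ b ∈ descL s k Q m q, tc s k U x ⊆ b := by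
  intro m
  induction m with
  | zero =>
    intro q hq x hpre hx
    have : q = x := hpre.eq_of_length (by have := hpre.length_le; omega)
    subst this
    obtain ⟨b, hb⟩ := List.exists_mem_of_ne_nil _ (win_ne (k := k) (Q := Q) ⟨q, by omega⟩)
    exact ⟨b, hb, win_all_tc ⟨q, by omega⟩ b hb⟩
  | succ m ih =>
    intro q hq x hpre hx
    rcases prefix_snoc_cases hpre with rfl | ⟨d, hd⟩
    · exact ⟨tc s k U (x ++ [0]) ∪ tc s k U x, mem_descL_trans, Finset.subset_union_right⟩
    · by_cases hd0 : d = 0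
      · subst hd0
        obtain ⟨b, hb, hsub⟩ := ih (q ++ [0]) (by simp; omega) x hd hx
        exact ⟨b, mem_descL_left hb, hsub⟩
      · have hd12 : d = 1 ∨ d = 2 := by fin_cases d <;> simp_all
        obtain ⟨b, hb, hsub⟩ := F_tcx (Q := Q) m (q ++ [d]) (by simp; omega) x hd hx
        exact ⟨b ∪ tc s k U q, mem_descL_seg hd12 hb, hsub.trans Finset.subset_union_left⟩

lemma dL_pair : ∀ (m : ℕ) (q : List (Fin 3)), q.length + m = s →
    ∀ (x : List (Fin 3)) (d : Fin 3), q <+: x → x.length + 1 ≤ s →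
    ∃ b ∈ descL s k Q m q, tc s k U x ⊆ b ∧ tc s k U (x ++ [d]) ⊆ b := by
  intro m
  induction m with
  | zero =>
    intro q hq x d hpre hx
    exact absurd (hpre.length_le) (by omega)
  | succ m ih =>
    intro q hq x d hpre hx
    rcases prefix_snoc_cases hpre with rfl | ⟨e, he⟩
    · by_cases hd0 : d = 0
      · subst hd0
        exact ⟨tc s k U (x ++ [0]) ∪ tc s k U x, mem_descL_trans,
          Finset.subset_union_right, Finset.subset_union_left⟩
      · have hd12 : d = 1 ∨ d = 2 := by fin_cases d <;> simp_all
        obtain ⟨b, hb, hsub⟩ := F_tcx (Q := Q) m (x ++ [d]) (by simp; omega) (x ++ [d])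
          (List.prefix_refl _) (by simp; omega)
        exact ⟨b ∪ tc s k U x, mem_descL_seg hd12 hb, Finset.subset_union_right,
          hsub.trans Finset.subset_union_left⟩
    · by_cases he0 : e = 0
      · subst he0
        obtain ⟨b, hb, h1, h2⟩ := ih (q ++ [0]) (by simp; omega) x d he hx
        exact ⟨b, mem_descL_left hb, h1, h2⟩
      · have he12 : e = 1 ∨ e = 2 := by fin_cases e <;> simp_all
        obtain ⟨b, hb, h1, h2⟩ := F_pair (Q := Q) m (q ++ [e]) (by simp; omega) x d he hx
        exact ⟨b ∪ tc s k U q, mem_descL_seg he12 hb, h1.trans Finset.subset_union_left,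
          h2.trans Finset.subset_union_left⟩

lemma dL_leafu : ∀ (m : ℕ) (q : List (Fin 3)), q.length + m = s →
    ∀ (j : LeafIdx s) (u : U), q <+: j.1 →
    ∃ b ∈ descL s k Q m q, (Sum.inr (j, u) : VT s k U) ∈ b ∧ tc s k U j.1 ⊆ b := by
  intro m
  induction m with
  | zero =>
    intro q hq j u hpre
    have hlj : q = j.1 := hpre.eq_of_length (by have := j.2; have := hpre.length_le; omega)
    subst hlj
    exact win_cov_u _ u
  | succ m ih =>
    intro q hq j u hpre
    rcases prefix_snoc_cases hpre with heq | ⟨d, hd⟩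
    · exfalso; have := j.2; rw [heq] at this; omega
    · by_cases hd0 : d = 0
      · subst hd0
        obtain ⟨b, hb, h1, h2⟩ := ih (q ++ [0]) (by simp; omega) j u hd
        exact ⟨b, mem_descL_left hb, h1, h2⟩
      · have hd12 : d = 1 ∨ d = 2 := by fin_cases d <;> simp_all
        obtain ⟨b, hb, h1, h2⟩ := F_leafu (Q := Q) m (q ++ [d]) (by simp; omega) j u hd
        exact ⟨b ∪ tc s k U q, mem_descL_seg hd12 hb, Finset.mem_union_left _ h1,
          h2.trans Finset.subset_union_left⟩

lemma dL_adjG : ∀ (m : ℕ) (q : List (Fin 3)), q.length + m = s →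
    ∀ (j : LeafIdx s) (u u' : U), q <+: j.1 → (G j).Adj u u' →
    ∃ b ∈ descL s k Q m q, (Sum.inr (j, u) : VT s k U) ∈ b ∧ (Sum.inr (j, u') : VT s k U) ∈ b := by
  intro m
  induction m with
  | zero =>
    intro q hq j u u' hpre hadj
    have hlj : q = j.1 := hpre.eq_of_length (by have := j.2; have := hpre.length_le; omega)
    subst hlj
    exact win_adjG _ u u' hadj
  | succ m ih =>
    intro q hq j u u' hpre hadj
    rcases prefix_snoc_cases hpre with heq | ⟨d, hd⟩
    · exfalso; have := j.2; rw [heq] at this; omega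
    · by_cases hd0 : d = 0
      · subst hd0
        obtain ⟨b, hb, h1, h2⟩ := ih (q ++ [0]) (by simp; omega) j u u' hd hadj
        exact ⟨b, mem_descL_left hb, h1, h2⟩
      · have hd12 : d = 1 ∨ d = 2 := by fin_cases d <;> simp_all
        obtain ⟨b, hb, h1, h2⟩ := F_adjG (Q := Q) m (q ++ [d]) (by simp; omega) j u u' hd hadj
        exact ⟨b ∪ tc s k U q, mem_descL_seg hd12 hb, Finset.mem_union_left _ h1,
          Finset.mem_union_left _ h2⟩

end CCPW


namespace CCPW

attribute [local instance] Classical.propDecidable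

variable {s k : ℕ} {U : Type} {G : LeafIdx s → SimpleGraph U}
variable {Q : ∀ j : LeafIdx s, PathDecomp (G j)}

/-! ### Lemmas about `Dm` -/

lemma all_digits (c d : Fin 3) :
    d = (if c = 0 then 1 else 0) ∨ d = (if c = 2 then 1 else 2) ∨ d = c := by
  fin_cases c <;> fin_cases d <;> simp

lemma digits_ne (c : Fin 3) :
    (if c = 0 then 1 else 0 : Fin 3) ≠ c ∧ (if c = 2 then 1 else 2 : Fin 3) ≠ c ∧
    (if c = 0 then 1 else 0 : Fin 3) ≠ (if c = 2 then 1 else 2 : Fin 3) := by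
  fin_cases c <;> simp

lemma prefix_of_tc_under {x y : List (Fin 3)} {v : VT s k U}
    (hv : v ∈ tc s k U x) (hu : under s k y v) : y <+: x := by
  obtain ⟨_, c, rfl⟩ := mem_tc_iff.1 hv
  exact hu

lemma snoc_prefix_snoc {p : List (Fin 3)} {d e : Fin 3} (h : (p ++ [d]) <+: (p ++ [e])) :
    d = e :=
  snoc_prefix_inj h (List.prefix_refl _)

lemma Dm_succ (Q : ∀ j : LeafIdx s, PathDecomp (G j)) (i : LeafIdx s) (m : ℕ) :
    Dm s k Q i (m+1) =
      descL s k Q m (i.1.take (s - m - 1) ++ [if i.1.getD (s - m - 1) 0 = 0 then 1 else 0]) ++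
      ([tc s k U (i.1.take (s - m - 1) ++ [if i.1.getD (s - m - 1) 0 = 0 then 1 else 0]) ∪
          tc s k U (i.1.take (s - m - 1))] ++
      ((Dm s k Q i m).map (· ∪ tc s k U (i.1.take (s - m - 1))) ++
      ([tc s k U (i.1.take (s - m - 1)) ∪
          tc s k U (i.1.take (s - m - 1) ++ [if i.1.getD (s - m - 1) 0 = 2 then 1 else 2])] ++
      (descL s k Q m (i.1.take (s - m - 1) ++
          [if i.1.getD (s - m - 1) 0 = 2 then 1 else 2])).reverse))) := rfl

section DmLemmas

variable (i : LeafIdx s)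

lemma take_len (m : ℕ) : (i.1.take (s - m)).length = min (s - m) s := by
  rw [List.length_take, i.2]

lemma take_snoc (m : ℕ) (hm : m + 1 ≤ s) :
    i.1.take (s - m - 1) ++ [i.1.getD (s - m - 1) 0] = i.1.take (s - m) := by
  have hlen' : s - m - 1 < i.1.length := by have := i.2; omega
  set n := s - m - 1 with hn
  have hsm : s - m = n + 1 := by omega
  rw [hsm, List.take_succ]
  congr 1
  rw [List.getD_eq_getElem _ _ hlen', List.getElem?_eq_getElem hlen']
  rfl

lemma take_prefix_take (m : ℕ) : i.1.take (s - m - 1) <+: i.1.take (s - m) :=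
  List.take_prefix_take_left (by omega)

lemma D_ne : ∀ (m : ℕ), m ≤ s → Dm s k Q i m ≠ [] := by
  intro m
  induction m with
  | zero => intro _; exact win_ne ⟨i.1, i.2⟩
  | succ m ih =>
    intro hm h
    rw [Dm_succ] at h
    simp at h

lemma D_support : ∀ (m : ℕ), m ≤ s →
    ∀ b ∈ Dm s k Q i m, ∀ v ∈ b, under s k (i.1.take (s - m)) v := by
  intro m
  induction m with
  | zero =>
    intro _ b hb v hv
    have h := win_support (Q := Q) ⟨i.1, i.2⟩ b hb v hv
    simp only [Nat.sub_zero, List.take_of_length_le (le_of_eq i.2)]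
    exact h
  | succ m ih =>
    intro hm b hb v hv
    rw [Dm_succ] at hb
    have hgoal : s - (m + 1) = s - m - 1 := by omega
    rw [hgoal]
    set p := i.1.take (s - m - 1) with hp
    have hplen : p.length = s - m - 1 := by
      rw [hp, List.length_take, i.2]; omega
    have hpalen : ∀ d : Fin 3, (p ++ [d]).length + m = s := by
      intro d; rw [List.length_append, hplen]; simp; omega
    rcases List.mem_append.1 hb with hb | hb
    · exact under_trans (by simp) (dL_support m _ (hpalen _) b hb v hv)
    rcases List.mem_append.1 hb with hb | hb
    · rw [List.mem_singleton.1 hb] at hv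
      rcases Finset.mem_union.1 hv with h | h
      · exact under_of_mem_tc h (by simp)
      · exact under_tc_self h
    rcases List.mem_append.1 hb with hb | hb
    · obtain ⟨b', hb', rfl⟩ := List.mem_map.1 hb
      rcases Finset.mem_union.1 hv with h | h
      · exact under_trans (by rw [hp]; exact take_prefix_take i m) (ih (by omega) b' hb' v h)
      · exact under_tc_self h
    rcases List.mem_append.1 hb with hb | hb
    · rw [List.mem_singleton.1 hb] at hv
      rcases Finset.mem_union.1 hv with h | h
      · exact under_tc_self h
      · exact under_of_mem_tc h (by simp)
    · rw [List.mem_reverse] at hb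
      exact under_trans (by simp) (dL_support m _ (hpalen _) b hb v hv)

lemma memL_D_under {m : ℕ} (hm : m ≤ s) {v : VT s k U}
    (h : MemL (Dm s k Q i m) v) : under s k (i.1.take (s - m)) v := by
  obtain ⟨b, hb, hv⟩ := h
  exact D_support i m hm b hb v hv

lemma take_zero_eq : i.1.take (s - 0) = i.1 := by
  simp only [Nat.sub_zero]
  exact List.take_of_length_le (le_of_eq i.2)

lemma D_root : ∀ (m : ℕ), m ≤ s → ∃ b ∈ Dm s k Q i m, tc s k U (i.1.take (s - m)) ⊆ b := by
  intro m
  induction m with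
  | zero =>
    obtain ⟨b, hb⟩ := List.exists_mem_of_ne_nil _ (win_ne (k := k) (Q := Q) ⟨i.1, i.2⟩)
    intro _
    rw [take_zero_eq]
    exact ⟨b, hb, win_all_tc ⟨i.1, i.2⟩ b hb⟩
  | succ m ih =>
    intro hm
    rw [Dm_succ]
    have hgoal : s - (m + 1) = s - m - 1 := by omega
    rw [hgoal]
    refine ⟨tc s k U (i.1.take (s - m - 1) ++ [if i.1.getD (s - m - 1) 0 = 0 then 1 else 0]) ∪
      tc s k U (i.1.take (s - m - 1)), ?_, Finset.subset_union_right⟩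
    exact List.mem_append.2 (Or.inr (List.mem_append.2 (Or.inl (List.mem_singleton.2 rfl))))

lemma D_card (hB : ∀ (j : LeafIdx s) t, ((Q j).bag t).card ≤ k)
    (hBi : ∀ t, ((Q i).bag t).card ≤ k - 1) :
    ∀ (m : ℕ), m ≤ s → ∀ b ∈ Dm s k Q i m, b.card ≤ k * (m + 1) + (k - 1) := by
  intro m
  induction m with
  | zero =>
    intro _ b hb
    have := win_card (Q := Q) ⟨i.1, i.2⟩ (k - 1) (fun t => hBi t) b hb
    omega
  | succ m ih =>
    intro hm b hb
    rw [Dm_succ] at hb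
    set p := i.1.take (s - m - 1) with hp
    have hplen : p.length = s - m - 1 := by rw [hp, List.length_take, i.2]; omega
    have hpalen : ∀ d : Fin 3, (p ++ [d]).length + m = s := by
      intro d; rw [List.length_append, hplen]; simp; omega
    have htcp := tc_card (s := s) (k := k) (U := U) (l := p)
    have e1 : k * (m + 2) = k * m + 2 * k := by ring
    have e2 : k * (m + 1) = k * m + k := by ring
    have e3 : k * (m + 1 + 1) = k * m + 2 * k := by ring
    rcases List.mem_append.1 hb with hb | hb
    · have := dL_card hB m _ (hpalen _) b hb
      omega
    rcases List.mem_append.1 hb with hb | hb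
    · rw [List.mem_singleton.1 hb]
      have h1 := Finset.card_union_le (tc s k U (p ++ [if i.1.getD (s - m - 1) 0 = 0 then 1 else 0])) (tc s k U p)
      have h2 := tc_card (s := s) (k := k) (U := U) (l := p ++ [if i.1.getD (s - m - 1) 0 = 0 then 1 else 0])
      omega
    rcases List.mem_append.1 hb with hb | hb
    · obtain ⟨b', hb', rfl⟩ := List.mem_map.1 hb
      have h1 := ih (by omega) b' hb'
      have h2 := Finset.card_union_le b' (tc s k U p)
      omega
    rcases List.mem_append.1 hb with hb | hb
    · rw [List.mem_singleton.1 hb]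
      have h1 := Finset.card_union_le (tc s k U p) (tc s k U (p ++ [if i.1.getD (s - m - 1) 0 = 2 then 1 else 2]))
      have h2 := tc_card (s := s) (k := k) (U := U) (l := p ++ [if i.1.getD (s - m - 1) 0 = 2 then 1 else 2])
      omega
    · rw [List.mem_reverse] at hb
      have := dL_card hB m _ (hpalen _) b hb
      omega

lemma D_tcx : ∀ (m : ℕ), m ≤ s → ∀ x : List (Fin 3), i.1.take (s - m) <+: x → x.length ≤ s →
    ∃ b ∈ Dm s k Q i m, tc s k U x ⊆ b := by
  intro m
  induction m with
  | zero =>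
    intro _ x hpre hx
    rw [take_zero_eq] at hpre
    have : i.1 = x := hpre.eq_of_length (by have := hpre.length_le; have := i.2; omega)
    subst this
    obtain ⟨b, hb⟩ := List.exists_mem_of_ne_nil _ (win_ne (k := k) (Q := Q) ⟨i.1, i.2⟩)
    exact ⟨b, hb, win_all_tc ⟨i.1, i.2⟩ b hb⟩
  | succ m ih =>
    intro hm x hpre hx
    rw [Dm_succ]
    have hgoal : s - (m + 1) = s - m - 1 := by omega
    rw [hgoal] at hpre
    set p := i.1.take (s - m - 1) with hp
    set c := i.1.getD (s - m - 1) 0 with hc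
    have hplen : p.length = s - m - 1 := by rw [hp, List.length_take, i.2]; omega
    have hpalen : ∀ d : Fin 3, (p ++ [d]).length + m = s := by
      intro d; rw [List.length_append, hplen]; simp; omega
    have hpc : p ++ [c] = i.1.take (s - m) := take_snoc i m hm
    rcases prefix_snoc_cases hpre with rfl | ⟨d, hd⟩
    · exact ⟨tc s k U (p ++ [if c = 0 then 1 else 0]) ∪ tc s k U p,
        List.mem_append.2 (Or.inr (List.mem_append.2 (Or.inl (List.mem_singleton.2 rfl)))),
        Finset.subset_union_right⟩
    · rcases all_digits c d with rfl | rfl | rfl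
      · obtain ⟨b, hb, hsub⟩ := dL_tcx (Q := Q) m _ (hpalen _) x hd hx
        exact ⟨b, List.mem_append.2 (Or.inl hb), hsub⟩
      · obtain ⟨b, hb, hsub⟩ := dL_tcx (Q := Q) m _ (hpalen _) x hd hx
        refine ⟨b, ?_, hsub⟩
        refine List.mem_append.2 (Or.inr (List.mem_append.2 (Or.inr (List.mem_append.2 (Or.inr
          (List.mem_append.2 (Or.inr ?_)))))))
        exact List.mem_reverse.2 hb
      · obtain ⟨b, hb, hsub⟩ := ih (by omega) x (by rw [← hpc]; exact hd) hx
        refine ⟨b ∪ tc s k U p, ?_, hsub.trans Finset.subset_union_left⟩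
        exact List.mem_append.2 (Or.inr (List.mem_append.2 (Or.inr (List.mem_append.2 (Or.inl
          (List.mem_map.2 ⟨b, hb, rfl⟩))))))

lemma D_pair : ∀ (m : ℕ), m ≤ s → ∀ (x : List (Fin 3)) (d : Fin 3),
    i.1.take (s - m) <+: x → x.length + 1 ≤ s →
    ∃ b ∈ Dm s k Q i m, tc s k U x ⊆ b ∧ tc s k U (x ++ [d]) ⊆ b := by
  intro m
  induction m with
  | zero =>
    intro _ x d hpre hx
    rw [take_zero_eq] at hpre
    exact absurd hpre.length_le (by have := i.2; omega)
  | succ m ih =>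
    intro hm x d hpre hx
    rw [Dm_succ]
    have hgoal : s - (m + 1) = s - m - 1 := by omega
    rw [hgoal] at hpre
    set p := i.1.take (s - m - 1) with hp
    set c := i.1.getD (s - m - 1) 0 with hc
    have hplen : p.length = s - m - 1 := by rw [hp, List.length_take, i.2]; omega
    have hpalen : ∀ e : Fin 3, (p ++ [e]).length + m = s := by
      intro e; rw [List.length_append, hplen]; simp; omega
    have hpc : p ++ [c] = i.1.take (s - m) := take_snoc i m hm
    rcases prefix_snoc_cases hpre with rfl | ⟨e, he⟩
    · rcases all_digits c d with rfl | rfl | rfl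
      · exact ⟨tc s k U (p ++ [if c = 0 then 1 else 0]) ∪ tc s k U p,
          List.mem_append.2 (Or.inr (List.mem_append.2 (Or.inl (List.mem_singleton.2 rfl)))),
          Finset.subset_union_right, Finset.subset_union_left⟩
      · refine ⟨tc s k U p ∪ tc s k U (p ++ [if c = 2 then 1 else 2]), ?_,
          Finset.subset_union_left, Finset.subset_union_right⟩
        exact List.mem_append.2 (Or.inr (List.mem_append.2 (Or.inr (List.mem_append.2 (Or.inr
          (List.mem_append.2 (Or.inl (List.mem_singleton.2 rfl))))))))
      · obtain ⟨b, hb, hsub⟩ := D_root i m (by omega)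
        refine ⟨b ∪ tc s k U p, ?_, Finset.subset_union_right, ?_⟩
        · exact List.mem_append.2 (Or.inr (List.mem_append.2 (Or.inr (List.mem_append.2 (Or.inl
            (List.mem_map.2 ⟨b, hb, rfl⟩))))))
        · rw [hpc]
          exact hsub.trans Finset.subset_union_left
    · rcases all_digits c e with rfl | rfl | rfl
      · obtain ⟨b, hb, h1, h2⟩ := dL_pair (Q := Q) m _ (hpalen _) x d he hx
        exact ⟨b, List.mem_append.2 (Or.inl hb), h1, h2⟩
      · obtain ⟨b, hb, h1, h2⟩ := dL_pair (Q := Q) m _ (hpalen _) x d he hx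
        refine ⟨b, ?_, h1, h2⟩
        refine List.mem_append.2 (Or.inr (List.mem_append.2 (Or.inr (List.mem_append.2 (Or.inr
          (List.mem_append.2 (Or.inr ?_)))))))
        exact List.mem_reverse.2 hb
      · obtain ⟨b, hb, h1, h2⟩ := ih (by omega) x d (by rw [← hpc]; exact he) hx
        refine ⟨b ∪ tc s k U p, ?_, h1.trans Finset.subset_union_left,
          h2.trans Finset.subset_union_left⟩
        exact List.mem_append.2 (Or.inr (List.mem_append.2 (Or.inr (List.mem_append.2 (Or.inl
          (List.mem_map.2 ⟨b, hb, rfl⟩))))))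

lemma D_leafu : ∀ (m : ℕ), m ≤ s → ∀ (j : LeafIdx s) (u : U), i.1.take (s - m) <+: j.1 →
    ∃ b ∈ Dm s k Q i m, (Sum.inr (j, u) : VT s k U) ∈ b ∧ tc s k U j.1 ⊆ b := by
  intro m
  induction m with
  | zero =>
    intro _ j u hpre
    rw [take_zero_eq] at hpre
    have hij : i = j := Subtype.ext (hpre.eq_of_length (by rw [i.2, j.2]))
    subst hij
    exact win_cov_u _ u
  | succ m ih =>
    intro hm j u hpre
    rw [Dm_succ]
    have hgoal : s - (m + 1) = s - m - 1 := by omega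
    rw [hgoal] at hpre
    set p := i.1.take (s - m - 1) with hp
    set c := i.1.getD (s - m - 1) 0 with hc
    have hplen : p.length = s - m - 1 := by rw [hp, List.length_take, i.2]; omega
    have hpalen : ∀ e : Fin 3, (p ++ [e]).length + m = s := by
      intro e; rw [List.length_append, hplen]; simp; omega
    have hpc : p ++ [c] = i.1.take (s - m) := take_snoc i m hm
    rcases prefix_snoc_cases hpre with heq | ⟨e, he⟩
    · exfalso; have := j.2; rw [heq] at this; omega
    · rcases all_digits c e with rfl | rfl | rfl
      · obtain ⟨b, hb, h1, h2⟩ := dL_leafu (Q := Q) m _ (hpalen _) j u he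
        exact ⟨b, List.mem_append.2 (Or.inl hb), h1, h2⟩
      · obtain ⟨b, hb, h1, h2⟩ := dL_leafu (Q := Q) m _ (hpalen _) j u he
        refine ⟨b, ?_, h1, h2⟩
        refine List.mem_append.2 (Or.inr (List.mem_append.2 (Or.inr (List.mem_append.2 (Or.inr
          (List.mem_append.2 (Or.inr ?_)))))))
        exact List.mem_reverse.2 hb
      · obtain ⟨b, hb, h1, h2⟩ := ih (by omega) j u (by rw [← hpc]; exact he)
        refine ⟨b ∪ tc s k U p, ?_, Finset.mem_union_left _ h1,
          h2.trans Finset.subset_union_left⟩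
        exact List.mem_append.2 (Or.inr (List.mem_append.2 (Or.inr (List.mem_append.2 (Or.inl
          (List.mem_map.2 ⟨b, hb, rfl⟩))))))

lemma D_adjG : ∀ (m : ℕ), m ≤ s → ∀ (j : LeafIdx s) (u u' : U), i.1.take (s - m) <+: j.1 →
    (G j).Adj u u' →
    ∃ b ∈ Dm s k Q i m, (Sum.inr (j, u) : VT s k U) ∈ b ∧ (Sum.inr (j, u') : VT s k U) ∈ b := by
  intro m
  induction m with
  | zero =>
    intro _ j u u' hpre hadj
    rw [take_zero_eq] at hpre
    have hij : i = j := Subtype.ext (hpre.eq_of_length (by rw [i.2, j.2]))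
    subst hij
    exact win_adjG _ u u' hadj
  | succ m ih =>
    intro hm j u u' hpre hadj
    rw [Dm_succ]
    have hgoal : s - (m + 1) = s - m - 1 := by omega
    rw [hgoal] at hpre
    set p := i.1.take (s - m - 1) with hp
    set c := i.1.getD (s - m - 1) 0 with hc
    have hplen : p.length = s - m - 1 := by rw [hp, List.length_take, i.2]; omega
    have hpalen : ∀ e : Fin 3, (p ++ [e]).length + m = s := by
      intro e; rw [List.length_append, hplen]; simp; omega
    have hpc : p ++ [c] = i.1.take (s - m) := take_snoc i m hm
    rcases prefix_snoc_cases hpre with heq | ⟨e, he⟩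
    · exfalso; have := j.2; rw [heq] at this; omega
    · rcases all_digits c e with rfl | rfl | rfl
      · obtain ⟨b, hb, h1, h2⟩ := dL_adjG (Q := Q) m _ (hpalen _) j u u' he hadj
        exact ⟨b, List.mem_append.2 (Or.inl hb), h1, h2⟩
      · obtain ⟨b, hb, h1, h2⟩ := dL_adjG (Q := Q) m _ (hpalen _) j u u' he hadj
        refine ⟨b, ?_, h1, h2⟩
        refine List.mem_append.2 (Or.inr (List.mem_append.2 (Or.inr (List.mem_append.2 (Or.inr
          (List.mem_append.2 (Or.inr ?_)))))))
        exact List.mem_reverse.2 hb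
      · obtain ⟨b, hb, h1, h2⟩ := ih (by omega) j u u' (by rw [← hpc]; exact he) hadj
        refine ⟨b ∪ tc s k U p, ?_, Finset.mem_union_left _ h1, Finset.mem_union_left _ h2⟩
        exact List.mem_append.2 (Or.inr (List.mem_append.2 (Or.inr (List.mem_append.2 (Or.inl
          (List.mem_map.2 ⟨b, hb, rfl⟩))))))

lemma revD_head {α : Type*} {L : List (Finset α)} (h : L ≠ []) :
    L.reverse.getD 0 ∅ = L.getD (L.length - 1) ∅ := by
  have h1 : 0 < L.length := List.length_pos_iff.2 h
  rw [List.getD_eq_getElem _ _ (by simpa using h1), List.getD_eq_getElem _ _ (by omega)]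
  have := List.getElem_reverse (l := L) (i := 0) (by simpa using h1)
  simpa using this

lemma D_conv : ∀ (m : ℕ), m ≤ s → ∀ v : VT s k U, IsConv (Dm s k Q i m) v := by
  intro m
  induction m with
  | zero => intro _ v; exact win_conv ⟨i.1, i.2⟩ v
  | succ m ih =>
    intro hm v
    rw [Dm_succ]
    set p := i.1.take (s - m - 1) with hp
    set c := i.1.getD (s - m - 1) 0 with hc
    set ad : Fin 3 := if c = 0 then 1 else 0 with had
    set bd : Fin 3 := if c = 2 then 1 else 2 with hbd
    obtain ⟨hac, hbc, hab⟩ := digits_ne c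
    have hplen : p.length = s - m - 1 := by rw [hp, List.length_take, i.2]; omega
    have hpalen : ∀ e : Fin 3, (p ++ [e]).length + m = s := by
      intro e; rw [List.length_append, hplen]; simp; omega
    have hpc : p ++ [c] = i.1.take (s - m) := take_snoc i m hm
    set A := descL s k Q m (p ++ [ad]) with hA
    set M := (Dm s k Q i m).map (· ∪ tc s k U p) with hM
    set R := (descL s k Q m (p ++ [bd])).reverse with hR
    set t1 := tc s k U (p ++ [ad]) ∪ tc s k U p with ht1
    set t2 := tc s k U p ∪ tc s k U (p ++ [bd]) with ht2
    -- support facts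
    have hAsup : ∀ w : VT s k U, MemL A w → under s k (p ++ [ad]) w := by
      intro w hw; exact memL_dL_under (hpalen _) hw
    have hRsup : ∀ w : VT s k U, MemL R w → under s k (p ++ [bd]) w := by
      intro w hw; exact memL_dL_under (hpalen _) (memL_reverse.1 hw)
    have hMne : M ≠ [] := by
      rw [hM]
      simp only [ne_eq, List.map_eq_nil_iff]
      exact D_ne i m (by omega)
    have hMsup : ∀ w : VT s k U, MemL M w → w ∈ tc s k U p ∨ under s k (p ++ [c]) w := by
      intro w hw
      rcases memL_map_union.1 hw with ⟨_, h⟩ | h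
      · exact Or.inl h
      · right
        rw [hpc]
        exact memL_D_under i (by omega) h
    have hMall : ∀ b' ∈ M, tc s k U p ⊆ b' := by
      intro b' hb'
      obtain ⟨b'', _, rfl⟩ := List.mem_map.1 hb'
      exact Finset.subset_union_right
    have hdLbne : descL s k Q m (p ++ [bd]) ≠ [] := dL_ne m _ (hpalen _)
    have hRne : R ≠ [] := by rw [hR]; simpa using hdLbne
    -- exclusion helpers
    have exc_tcp_pa : ∀ w : VT s k U, w ∈ tc s k U p → under s k (p ++ [ad]) w → False := by
      intro w h1 h2; exact not_under_snoc_of_tc h1 h2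
    have exc_tcp_pb : ∀ w : VT s k U, w ∈ tc s k U p → under s k (p ++ [bd]) w → False := by
      intro w h1 h2; exact not_under_snoc_of_tc h1 h2
    have exc_tcp_pc : ∀ w : VT s k U, w ∈ tc s k U p → under s k (p ++ [c]) w → False := by
      intro w h1 h2; exact not_under_snoc_of_tc h1 h2
    have exc_tcpa_tcp : ∀ w : VT s k U, w ∈ tc s k U (p ++ [ad]) → w ∈ tc s k U p → False := by
      intro w h1 h2
      have := addr_eq_of_mem_tc h1 h2
      apply_fun List.length at this
      simp at this
    have exc_tcpb_tcp : ∀ w : VT s k U, w ∈ tc s k U (p ++ [bd]) → w ∈ tc s k U p → False := by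
      intro w h1 h2
      have := addr_eq_of_mem_tc h1 h2
      apply_fun List.length at this
      simp at this
    -- Step 1 : [t2] ++ R
    have convT2R : IsConv ([t2] ++ R) v := by
      refine isConv_append (isConv_singleton _ _) (isConv_reverse (dL_conv m _ (hpalen bd) v)) ?_
      intro h1 h2
      have hv2 : v ∈ t2 := by
        obtain ⟨bb, hbb, hvv⟩ := h1
        rwa [List.mem_singleton.1 hbb] at hvv
      have hub : under s k (p ++ [bd]) v := hRsup v h2
      have hvb : v ∈ tc s k U (p ++ [bd]) := by
        rcases Finset.mem_union.1 hv2 with h | h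
        · exact absurd hub (fun hh => exc_tcp_pb v h hh)
        · exact h
      refine ⟨by simpa [getD_singleton] using hv2, ?_⟩
      rw [hR, revD_head hdLbne]
      exact dL_last m _ (hpalen bd) hvb
    -- Step 2 : M ++ ([t2] ++ R)
    have convMT2R : IsConv (M ++ ([t2] ++ R)) v := by
      refine isConv_append (isConv_map_union _ (ih (by omega) v)) convT2R ?_
      intro h1 h2
      by_cases hvp : v ∈ tc s k U p
      · constructor
        · exact hMall _ (getD_mem (by have := List.length_pos_iff.2 hMne; omega)) hvp
        · rw [headD_append (by simp), getD_singleton]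
          exact Finset.mem_union_left _ hvp
      · exfalso
        have hupc : under s k (p ++ [c]) v := by
          rcases hMsup v h1 with h | h
          · exact absurd h hvp
          · exact h
        rcases memL_append.1 h2 with h | h
        · obtain ⟨bb, hbb, hvv⟩ := h
          rw [List.mem_singleton.1 hbb] at hvv
          rcases Finset.mem_union.1 hvv with h' | h'
          · exact hvp h'
          · exact hbc (snoc_prefix_snoc (prefix_of_tc_under h' hupc)).symm
        · exact under_snoc_disjoint (Ne.symm hbc) hupc (hRsup v h)
    -- Step 3 : [t1] ++ (M ++ ([t2] ++ R))
    have convT1 : IsConv ([t1] ++ (M ++ ([t2] ++ R))) v := by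
      refine isConv_append (isConv_singleton _ _) convMT2R ?_
      intro h1 h2
      have hv1 : v ∈ t1 := by
        obtain ⟨bb, hbb, hvv⟩ := h1
        rwa [List.mem_singleton.1 hbb] at hvv
      have hvp : v ∈ tc s k U p := by
        rcases Finset.mem_union.1 hv1 with h | h
        · exfalso
          rcases memL_append.1 h2 with hh | hh
          · rcases hMsup v hh with h' | h'
            · exact exc_tcpa_tcp v h h'
            · exact hac (snoc_prefix_snoc (prefix_of_tc_under h h')).symm
          rcases memL_append.1 hh with hh' | hh'
          · obtain ⟨bb, hbb, hvv⟩ := hh'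
            rw [List.mem_singleton.1 hbb] at hvv
            rcases Finset.mem_union.1 hvv with h' | h'
            · exact exc_tcpa_tcp v h h'
            · have := addr_eq_of_mem_tc h h'
              have h2 := List.append_inj' this rfl
              exact hab (by simpa using h2.2)
          · exact under_snoc_disjoint hab (under_tc_self h) (hRsup v hh')
        · exact h
      refine ⟨by simpa [getD_singleton] using hv1, ?_⟩
      rw [headD_append hMne]
      exact hMall _ (getD_mem (by have := List.length_pos_iff.2 hMne; omega)) hvp
    -- Step 4 : A ++ rest
    refine isConv_append (dL_conv m _ (hpalen ad) v) convT1 ?_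
    intro h1 h2
    have hua : under s k (p ++ [ad]) v := hAsup v h1
    have hva : v ∈ tc s k U (p ++ [ad]) := by
      rcases memL_append.1 h2 with hh | hh
      · obtain ⟨bb, hbb, hvv⟩ := hh
        rw [List.mem_singleton.1 hbb] at hvv
        rcases Finset.mem_union.1 hvv with h' | h'
        · exact h'
        · exact absurd hua (fun x => exc_tcp_pa v h' x)
      rcases memL_append.1 hh with hh' | hh'
      · exfalso
        rcases hMsup v hh' with h' | h'
        · exact exc_tcp_pa v h' hua
        · exact under_snoc_disjoint hac hua h'
      rcases memL_append.1 hh' with hh'' | hh''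
      · exfalso
        obtain ⟨bb, hbb, hvv⟩ := hh''
        rw [List.mem_singleton.1 hbb] at hvv
        rcases Finset.mem_union.1 hvv with h' | h'
        · exact exc_tcp_pa v h' hua
        · exact hab (snoc_prefix_snoc (prefix_of_tc_under h' hua))
      · exact absurd (hRsup v hh'') (fun x => under_snoc_disjoint hab hua x)
    constructor
    · exact dL_last m _ (hpalen ad) hva
    · rw [headD_append (by simp), getD_singleton]
      exact Finset.mem_union_left _ hva

end DmLemmas

end CCPW

/-- If some input graph `G_i` has pathwidth at most `k − 2` and every input
graph admits a path decomposition of width at most `k − 1`, then the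
cross-composed graph `G'` has pathwidth at most `k(s + 2) − 2`. -/
theorem crossComposed_pathwidth_le (s k : ℕ) (hk : 2 ≤ k) {U : Type}
    (G : LeafIdx s → SimpleGraph U)
    (hyes : ∃ i : LeafIdx s, pathwidth (G i) ≤ k - 2)
    (hdecomp : ∀ j : LeafIdx s, ∃ P : PathDecomp (G j), P.width ≤ k - 1) :
    pathwidth (crossComposed s k G) ≤ k * (s + 2) - 2 := by
  classical
  obtain ⟨i, hi⟩ := hyes
  -- extract a decomposition of the special instance of width ≤ k - 2
  have hSne : {w | ∃ P : PathDecomp (G i), P.width = w}.Nonempty := by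
    obtain ⟨P, _⟩ := hdecomp i
    exact ⟨P.width, P, rfl⟩
  obtain ⟨Pi, hPi⟩ := Nat.sInf_mem hSne
  have hPiw : Pi.width ≤ k - 2 := le_trans (le_of_eq hPi) hi
  -- choose decompositions with the required bag bounds
  have hchoice : ∀ j : LeafIdx s, ∃ P : PathDecomp (G j),
      (∀ t, (P.bag t).card ≤ k) ∧ (j = i → ∀ t, (P.bag t).card ≤ k - 1) := by
    intro j
    by_cases hj : j = i
    · subst hj
      have hsup : (Finset.univ.sup fun t => (Pi.bag t).card) ≤ k - 1 := by
        have h1 := hPiw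
        unfold PathDecomp.width at h1
        omega
      have hcard : ∀ t, (Pi.bag t).card ≤ k - 1 := by
        intro t
        have h2 : (Pi.bag t).card ≤ Finset.univ.sup fun t => (Pi.bag t).card :=
          Finset.le_sup (f := fun t => (Pi.bag t).card) (Finset.mem_univ t)
        omega
      exact ⟨Pi, fun t => le_trans (hcard t) (by omega), fun _ => hcard⟩
    · obtain ⟨P, hP⟩ := hdecomp j
      refine ⟨P, ?_, fun h => absurd h hj⟩
      intro t
      have hsup : (Finset.univ.sup fun t => (P.bag t).card) ≤ k := by
        unfold PathDecomp.width at hP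
        omega
      have h2 : (P.bag t).card ≤ Finset.univ.sup fun t => (P.bag t).card :=
        Finset.le_sup (f := fun t => (P.bag t).card) (Finset.mem_univ t)
      omega
  set Q : ∀ j : LeafIdx s, PathDecomp (G j) := fun j => (hchoice j).choose with hQdef
  have hQ : ∀ (j : LeafIdx s) t, ((Q j).bag t).card ≤ k := fun j => (hchoice j).choose_spec.1
  have hQi : ∀ t, ((Q i).bag t).card ≤ k - 1 := (hchoice i).choose_spec.2 rfl
  -- the decomposition list
  set L := CCPW.Dm s k Q i s with hLdef
  have hLne : L ≠ [] := CCPW.D_ne (k := k) (Q := Q) i s (le_refl s)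
  have hnil : i.1.take (s - s) = [] := by simp
  have hnilpre : ∀ x : List (Fin 3), i.1.take (s - s) <+: x := by
    intro x; rw [hnil]; exact List.nil_prefix
  -- build the path decomposition
  set P : PathDecomp (crossComposed s k G) :=
    { n := L.length
      bag := fun idx => L.get idx
      mem_bag := by
        intro v
        have hmem : ∃ b ∈ L, v ∈ b := by
          cases v with
          | inl x =>
            obtain ⟨x1, cx⟩ := x
            obtain ⟨b, hb, hsub⟩ := CCPW.D_tcx (k := k) (Q := Q) i s (le_refl s) x1.1 (hnilpre _) x1.2
            exact ⟨b, hb, hsub (CCPW.mem_tc_self x1.1 x1.2 cx)⟩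
          | inr ju =>
            obtain ⟨j, u⟩ := ju
            obtain ⟨b, hb, hmem, _⟩ := CCPW.D_leafu (k := k) (Q := Q) i s (le_refl s) j u (hnilpre _)
            exact ⟨b, hb, hmem⟩
        obtain ⟨b, hb, hv⟩ := hmem
        obtain ⟨idx, hidx, rfl⟩ := List.mem_iff_get.1 hb
        exact ⟨idx, hv⟩
      adj_bag := by
        have key : ∀ u v : (TreeVert s × Fin k) ⊕ (LeafIdx s × U),
            ((∃ p q : TreeVert s × Fin k, u = Sum.inl p ∧ v = Sum.inl q ∧
              (p.1.1 = q.1.1 ∨ ∃ a : Fin 3, q.1.1 = p.1.1 ++ [a])) ∨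
            (∃ (l : LeafIdx s) (u1 u2 : U), u = Sum.inr (l, u1) ∧ v = Sum.inr (l, u2) ∧
              (G l).Adj u1 u2) ∨
            (∃ (l : LeafIdx s) (u1 : U) (q : TreeVert s × Fin k),
              u = Sum.inr (l, u1) ∧ v = Sum.inl q ∧ q.1.1 = l.1)) →
            ∃ b ∈ L, u ∈ b ∧ v ∈ b := by
          rintro u v (⟨pp, qq, rfl, rfl, hrel⟩ | ⟨l, u1, u2, rfl, rfl, hadj⟩ |
            ⟨l, u1, qq, rfl, rfl, hq⟩)
          · rcases hrel with heq | ⟨a, ha⟩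
            · obtain ⟨b, hb, hsub⟩ := CCPW.D_tcx (k := k) (Q := Q) i s (le_refl s) pp.1.1 (hnilpre _) pp.1.2
              refine ⟨b, hb, hsub (CCPW.mem_tc_self pp.1.1 pp.1.2 pp.2), hsub ?_⟩
              refine CCPW.mem_tc_iff.2 ⟨pp.1.2, qq.2, ?_⟩
              have hqq : qq = ((⟨pp.1.1, pp.1.2⟩ : TreeVert s), qq.2) :=
                Prod.ext (Subtype.ext heq.symm) rfl
              exact congrArg Sum.inl hqq
            · have hlen : pp.1.1.length + 1 ≤ s := by
                have := qq.1.2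
                rw [ha] at this
                simpa using this
              obtain ⟨b, hb, h1, h2⟩ := CCPW.D_pair (k := k) (Q := Q) i s (le_refl s) pp.1.1 a (hnilpre _) hlen
              refine ⟨b, hb, h1 (CCPW.mem_tc_self pp.1.1 pp.1.2 pp.2), h2 ?_⟩
              refine CCPW.mem_tc_iff.2 ⟨by simpa using hlen, qq.2, ?_⟩
              have hqq : qq = ((⟨pp.1.1 ++ [a], by simpa using hlen⟩ : TreeVert s), qq.2) :=
                Prod.ext (Subtype.ext ha) rfl
              exact congrArg Sum.inl hqq
          · obtain ⟨b, hb, h1, h2⟩ := CCPW.D_adjG (k := k) (Q := Q) i s (le_refl s) l u1 u2 (hnilpre _) hadj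
            exact ⟨b, hb, h1, h2⟩
          · obtain ⟨b, hb, h1, h2⟩ := CCPW.D_leafu (k := k) (Q := Q) i s (le_refl s) l u1 (hnilpre _)
            refine ⟨b, hb, h1, h2 ?_⟩
            refine CCPW.mem_tc_iff.2 ⟨le_of_eq l.2, qq.2, ?_⟩
            have hqq : qq = ((⟨l.1, le_of_eq l.2⟩ : TreeVert s), qq.2) :=
              Prod.ext (Subtype.ext hq) rfl
            exact congrArg Sum.inl hqq
        intro u v hadj
        rw [crossComposed, SimpleGraph.fromRel_adj] at hadj
        obtain ⟨hne, hrel | hrel⟩ := hadj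
        · obtain ⟨b, hb, h1, h2⟩ := key u v hrel
          obtain ⟨idx, hidx, rfl⟩ := List.mem_iff_get.1 hb
          exact ⟨idx, h1, h2⟩
        · obtain ⟨b, hb, h1, h2⟩ := key v u hrel
          obtain ⟨idx, hidx, rfl⟩ := List.mem_iff_get.1 hb
          exact ⟨idx, h2, h1⟩
      convex := by
        intro v ia ja la hij hjl hvi hvl
        have hconv := CCPW.D_conv (k := k) (Q := Q) i s (le_refl s) v
        have hij' : (ia : ℕ) ≤ (ja : ℕ) := hij
        have hjl' : (ja : ℕ) ≤ (la : ℕ) := hjl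
        have h1 : v ∈ L.getD (ia : ℕ) ∅ := by
          rw [List.getD_eq_getElem _ _ ia.isLt]
          exact hvi
        have h3 : v ∈ L.getD (la : ℕ) ∅ := by
          rw [List.getD_eq_getElem _ _ la.isLt]
          exact hvl
        have h2 := hconv (ia : ℕ) (ja : ℕ) (la : ℕ) hij' hjl' la.isLt h1 h3
        rw [List.getD_eq_getElem _ _ ja.isLt] at h2
        exact h2
      } with hPdef
  have hwidth : P.width ≤ k * (s + 2) - 2 := by
    have hsup : (Finset.univ.sup fun idx => (P.bag idx).card) ≤ k * (s + 1) + (k - 1) := by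
      refine Finset.sup_le ?_
      intro idx _
      have hmem : P.bag idx ∈ L := List.get_mem L idx
      exact CCPW.D_card (k := k) (Q := Q) i hQ hQi s (le_refl s) _ hmem
    unfold PathDecomp.width
    have e : k * (s + 2) = k * (s + 1) + k := by ring
    omega
  calc pathwidth (crossComposed s k G) ≤ P.width := Nat.sInf_le ⟨P, rfl⟩
  _ ≤ k * (s + 2) - 2 := hwidth
end

section
/- In the cross-composed graph G' (the inflation of 𝕋̃^s by k with each leaf-clique replaced by an input graph G_i joined to the copies of the leaf's parent), if every input graph G_i has pathwidth at least k − 1, then pw(G') ≥ k(s+2) − 1. -/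
open SimpleGraph

instance (s : ℕ) : DecidableEq (TreeVert s) := by delta TreeVert; infer_instance
instance (s : ℕ) : DecidableEq (LeafIdx s) := by delta LeafIdx; infer_instance

instance (s : ℕ) : Fintype (TreeVert s) := by
  delta TreeVert
  exact Fintype.ofSurjective
    (fun p : Σ t : Fin (s+1), (Fin t.1 → Fin 3) =>
      (⟨List.ofFn p.2, by simpa using Nat.lt_succ_iff.mp p.1.2⟩ : {l : List (Fin 3) // l.length ≤ s}))
    (by
      rintro ⟨l, hl⟩
      refine ⟨⟨⟨l.length, by omega⟩, fun i => l.get i⟩, ?_⟩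
      simp [List.ofFn_get])

instance (s : ℕ) : Fintype (LeafIdx s) := by
  delta LeafIdx
  exact Fintype.ofSurjective
    (fun g : Fin s → Fin 3 => (⟨List.ofFn g, by simp⟩ : {l : List (Fin 3) // l.length = s}))
    (by
      rintro ⟨l, hl⟩
      subst hl
      exact ⟨fun i => l.get i, by simp [List.ofFn_get]⟩)


/-- Helly property for convex subsets of `Fin n`. -/
lemma helly {n : ℕ} {ι : Type*} [Fintype ι] [Nonempty ι] (S : ι → Finset (Fin n))
    (hconv : ∀ i, ∀ a b c : Fin n, a ≤ b → b ≤ c → a ∈ S i → c ∈ S i → b ∈ S i)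
    (hpair : ∀ i j, ∃ x, x ∈ S i ∧ x ∈ S j) : ∃ x, ∀ i, x ∈ S i := by
  have hne : ∀ i, (S i).Nonempty := fun i => by
    obtain ⟨x, hx, -⟩ := hpair i i; exact ⟨x, hx⟩
  classical
  have huniv : (Finset.univ : Finset ι).Nonempty := Finset.univ_nonempty
  refine ⟨Finset.univ.sup' huniv (fun i => (S i).min' (hne i)), fun i => ?_⟩
  obtain ⟨i0, -, hi0⟩ := Finset.exists_mem_eq_sup' huniv (fun i => (S i).min' (hne i))
  have h1 : (S i).min' (hne i) ≤ Finset.univ.sup' huniv (fun i => (S i).min' (hne i)) :=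
    Finset.le_sup' (fun i => (S i).min' (hne i)) (Finset.mem_univ i)
  have h2 : Finset.univ.sup' huniv (fun i => (S i).min' (hne i)) ≤ (S i).max' (hne i) := by
    rw [hi0]
    obtain ⟨y, hy0, hyi⟩ := hpair i0 i
    calc (S i0).min' (hne i0) ≤ y := Finset.min'_le _ _ hy0
    _ ≤ (S i).max' (hne i) := Finset.le_max' _ _ hyi
  exact hconv i _ _ _ h1 h2 (Finset.min'_mem _ _) (Finset.max'_mem _ _)

/-- Union of two intersecting convex predicates is convex. -/
lemma convex_union {n : ℕ} {Q1 Q2 : Fin n → Prop}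
    (h1 : ∀ a b c : Fin n, a ≤ b → b ≤ c → Q1 a → Q1 c → Q1 b)
    (h2 : ∀ a b c : Fin n, a ≤ b → b ≤ c → Q2 a → Q2 c → Q2 b)
    (hmeet : ∃ p, Q1 p ∧ Q2 p) :
    ∀ a b c : Fin n, a ≤ b → b ≤ c → (Q1 a ∨ Q2 a) → (Q1 c ∨ Q2 c) → Q1 b ∨ Q2 b := by
  obtain ⟨p, hp1, hp2⟩ := hmeet
  rintro a b c hab hbc (ha | ha) (hc | hc)
  · exact Or.inl (h1 a b c hab hbc ha hc)
  · rcases le_total b p with h | h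
    · exact Or.inl (h1 a b p hab h ha hp1)
    · exact Or.inr (h2 p b c h hbc hp2 hc)
  · rcases le_total b p with h | h
    · exact Or.inr (h2 a b p hab h ha hp2)
    · exact Or.inl (h1 p b c h hbc hp1 hc)
  · exact Or.inr (h2 a b c hab hbc ha hc)

set_option linter.unusedSectionVars false


set_option linter.unusedSectionVars false

section Aux
variable {s k : ℕ} {U : Type} [Fintype U] {G : LeafIdx s → SimpleGraph U}

lemma treevert_ext {v w : TreeVert s} (h : v.1 = w.1) : v = w := Subtype.ext h
lemma leafidx_ext {v w : LeafIdx s} (h : v.1 = w.1) : v = w := Subtype.ext h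

lemma cc_adj_copies (v : TreeVert s) {i j : Fin k} (h : i ≠ j) :
    (crossComposed s k G).Adj (Sum.inl (v, i)) (Sum.inl (v, j)) := by
  rw [crossComposed, SimpleGraph.fromRel_adj]
  exact ⟨by simp [h], Or.inl (Or.inl ⟨(v, i), (v, j), rfl, rfl, Or.inl rfl⟩)⟩

lemma cc_adj_child {v w : TreeVert s} {a : Fin 3} (h : w.1 = v.1 ++ [a]) (i j : Fin k) :
    (crossComposed s k G).Adj (Sum.inl (v, i)) (Sum.inl (w, j)) := by
  rw [crossComposed, SimpleGraph.fromRel_adj]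
  refine ⟨?_, Or.inl (Or.inl ⟨(v, i), (w, j), rfl, rfl, Or.inr ⟨a, h⟩⟩)⟩
  simp only [ne_eq, Sum.inl.injEq, Prod.mk.injEq, not_and]
  intro hv
  exfalso
  have : v.1 = w.1 := by rw [hv]
  rw [h] at this
  simpa using congrArg List.length this

lemma cc_adj_pend (lf : LeafIdx s) (u : U) {v : TreeVert s} (h : v.1 = lf.1) (j : Fin k) :
    (crossComposed s k G).Adj (Sum.inr (lf, u)) (Sum.inl (v, j)) := by
  rw [crossComposed, SimpleGraph.fromRel_adj]
  exact ⟨by simp, Or.inl (Or.inr (Or.inr ⟨lf, u, (v, j), rfl, rfl, h⟩))⟩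

lemma cc_adj_gad (lf : LeafIdx s) {u u' : U} (h : (G lf).Adj u u') :
    (crossComposed s k G).Adj (Sum.inr (lf, u)) (Sum.inr (lf, u')) := by
  rw [crossComposed, SimpleGraph.fromRel_adj]
  exact ⟨by simp [h.ne], Or.inl (Or.inr (Or.inl ⟨lf, u, u', rfl, rfl, h⟩))⟩

variable (P : PathDecomp (crossComposed s k G))

noncomputable def SS (w : (TreeVert s × Fin k) ⊕ (LeafIdx s × U)) : Finset (Fin P.n) :=
  @Finset.filter _ (fun i => w ∈ P.bag i) (Classical.decPred _) Finset.univ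

lemma mem_SS {w i} : i ∈ SS P w ↔ w ∈ P.bag i := by simp [SS]

/-- Helly for pairwise adjacent-or-equal families of vertices. -/
lemma helly_SS {ι : Type*} [Fintype ι] [Nonempty ι]
    (f : ι → (TreeVert s × Fin k) ⊕ (LeafIdx s × U))
    (h : ∀ i j, f i = f j ∨ (crossComposed s k G).Adj (f i) (f j)) :
    ∃ x, ∀ i, f i ∈ P.bag x := by
  have := helly (n := P.n) (fun i => SS P (f i))
    (fun i a b c hab hbc ha hc =>
      (mem_SS P).mpr (P.convex _ a b c hab hbc ((mem_SS P).mp ha) ((mem_SS P).mp hc)))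
    (fun i j => by
      rcases h i j with he | ha
      · obtain ⟨x, hx⟩ := P.mem_bag (f i)
        exact ⟨x, (mem_SS P).mpr hx, (mem_SS P).mpr (he ▸ hx)⟩
      · obtain ⟨x, hx1, hx2⟩ := P.adj_bag _ _ ha
        exact ⟨x, (mem_SS P).mpr hx1, (mem_SS P).mpr hx2⟩)
  obtain ⟨x, hx⟩ := this
  exact ⟨x, fun i => (mem_SS P).mp (hx i)⟩

noncomputable def KF (v : TreeVert s) : Finset (Fin P.n) :=
  @Finset.filter _ (fun i => ∀ j : Fin k, Sum.inl (v, j) ∈ P.bag i) (Classical.decPred _)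
    Finset.univ

lemma mem_KF {v i} : i ∈ KF P v ↔ ∀ j : Fin k, Sum.inl (v, j) ∈ P.bag i := by simp [KF]

lemma KF_convex (v : TreeVert s) :
    ∀ a b c : Fin P.n, a ≤ b → b ≤ c → a ∈ KF P v → c ∈ KF P v → b ∈ KF P v := by
  intro a b c hab hbc ha hc
  rw [mem_KF P] at ha hc ⊢
  exact fun j => P.convex _ a b c hab hbc (ha j) (hc j)

lemma KF_nonempty (hk : 0 < k) (v : TreeVert s) : ∃ x, x ∈ KF P v := by
  haveI : Nonempty (Fin k) := ⟨⟨0, hk⟩⟩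
  obtain ⟨x, hx⟩ := helly_SS P (fun j : Fin k => Sum.inl (v, j)) (fun i j => by
    rcases eq_or_ne i j with rfl | h
    · exact Or.inl rfl
    · exact Or.inr (cc_adj_copies v h))
  exact ⟨x, (mem_KF P).mpr hx⟩

lemma KF_meet (hk : 0 < k) {v w : TreeVert s} {a : Fin 3} (h : w.1 = v.1 ++ [a]) :
    ∃ x, x ∈ KF P v ∧ x ∈ KF P w := by
  haveI : Nonempty (Fin k) := ⟨⟨0, hk⟩⟩
  obtain ⟨x, hx⟩ := helly_SS P
    (fun j : Fin k ⊕ Fin k => Sum.elim (fun i => Sum.inl (v, i)) (fun i => Sum.inl (w, i)) j)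
    (fun i j => by
      rcases i with i | i <;> rcases j with j | j
      · rcases eq_or_ne i j with rfl | hne
        · exact Or.inl rfl
        · exact Or.inr (cc_adj_copies v hne)
      · exact Or.inr (cc_adj_child h i j)
      · exact Or.inr ((cc_adj_child h j i).symm)
      · rcases eq_or_ne i j with rfl | hne
        · exact Or.inl rfl
        · exact Or.inr (cc_adj_copies w hne))
  refine ⟨x, (mem_KF P).mpr fun j => hx (Sum.inl j), (mem_KF P).mpr fun j => hx (Sum.inr j)⟩

end Aux


section LL
variable {s k : ℕ} {U : Type} [Fintype U] {G : LeafIdx s → SimpleGraph U}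
variable (P : PathDecomp (crossComposed s k G))

/-- Gadget vertices of leaf `lf` present in bag `x`. -/
noncomputable def UF (lf : LeafIdx s) (x : Fin P.n) : Finset U :=
  @Finset.filter _ (fun u : U => Sum.inr (lf, u) ∈ P.bag x) (Classical.decPred _) Finset.univ

lemma mem_UF {lf : LeafIdx s} {x : Fin P.n} {u : U} :
    u ∈ UF P lf x ↔ Sum.inr (lf, u) ∈ P.bag x := by simp [UF]

lemma leaf_lemma (hk : 2 ≤ k) (hno : ∀ i : LeafIdx s, k - 1 ≤ pathwidth (G i)) (lf : LeafIdx s) :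
    ∃ z : Fin P.n, z ∈ KF P ⟨lf.1, le_of_eq lf.2⟩ ∧ k ≤ (UF P lf z).card := by
  classical
  haveI : Nonempty (Fin k) := ⟨⟨0, by omega⟩⟩
  set y : TreeVert s := ⟨lf.1, le_of_eq lf.2⟩ with hy
  obtain ⟨x0, hx0⟩ := KF_nonempty P (by omega) y
  have hJne : (KF P y).Nonempty := ⟨x0, hx0⟩
  have hlohi : (KF P y).min' hJne ≤ (KF P y).max' hJne :=
    Finset.min'_le _ _ (Finset.max'_mem _ _)
  set lo := (KF P y).min' hJne with hlo
  set hi := (KF P y).max' hJne with hhi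
  set clamp : Fin P.n → Fin P.n := fun x => max lo (min hi x) with hclamp
  have clamp_mem : ∀ x, clamp x ∈ KF P y := fun x =>
    KF_convex P y lo (clamp x) hi (le_max_left _ _)
      (max_le hlohi (min_le_left _ _)) (Finset.min'_mem _ _) (Finset.max'_mem _ _)
  have clamp_eq : ∀ x, x ∈ KF P y → clamp x = x := by
    intro x hx
    have h1 : lo ≤ x := Finset.min'_le _ _ hx
    have h2 : x ≤ hi := Finset.le_max' _ _ hx
    simp [hclamp, min_eq_right h2, max_eq_right h1]
  have clamp_mono : ∀ x x' : Fin P.n, x ≤ x' → clamp x ≤ clamp x' := fun x x' h =>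
    max_le_max le_rfl (min_le_min le_rfl h)
  let P' : PathDecomp (G lf) :=
  { n := P.n
    bag := fun x => UF P lf (clamp x)
    mem_bag := by
      intro u
      obtain ⟨x, hx⟩ := helly_SS P
        (fun o : Option (Fin k) => o.elim (Sum.inr (lf, u)) (fun j => Sum.inl (y, j)))
        (by
          rintro (_ | i) (_ | j)
          · exact Or.inl rfl
          · exact Or.inr (cc_adj_pend lf u rfl j)
          · exact Or.inr (cc_adj_pend lf u rfl i).symm
          · rcases eq_or_ne i j with rfl | h
            exacts [Or.inl rfl, Or.inr (cc_adj_copies y h)])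
      have hxJ : x ∈ KF P y := (mem_KF P).mpr fun j => hx (some j)
      exact ⟨x, (mem_UF P).mpr (by rw [clamp_eq x hxJ]; exact hx none)⟩
    adj_bag := by
      intro u u' huv
      obtain ⟨x, hx⟩ := helly_SS P
        (fun o : Bool ⊕ Fin k =>
          Sum.elim (fun b => Sum.inr (lf, if b then u else u')) (fun j => Sum.inl (y, j)) o)
        (by
          rintro (b | i) (b' | j)
          · cases b <;> cases b'
            · exact Or.inl rfl
            · exact Or.inr (cc_adj_gad lf huv).symm
            · exact Or.inr (cc_adj_gad lf huv)
            · exact Or.inl rfl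
          · exact Or.inr (cc_adj_pend lf _ rfl j)
          · exact Or.inr (cc_adj_pend lf _ rfl i).symm
          · rcases eq_or_ne i j with rfl | h
            exacts [Or.inl rfl, Or.inr (cc_adj_copies y h)])
      have hxJ : x ∈ KF P y := (mem_KF P).mpr fun j => hx (Sum.inr j)
      refine ⟨x, (mem_UF P).mpr ?_, (mem_UF P).mpr ?_⟩ <;> rw [clamp_eq x hxJ]
      · simpa using hx (Sum.inl true)
      · simpa using hx (Sum.inl false)
    convex := by
      intro u i j l hij hjl hi' hl'
      exact (mem_UF P).mpr
        (P.convex _ _ _ _ (clamp_mono _ _ hij) (clamp_mono _ _ hjl)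
          ((mem_UF P).mp hi') ((mem_UF P).mp hl')) }
  have hle : pathwidth (G lf) ≤ P'.width := csInf_le (OrderBot.bddBelow _) ⟨P', rfl⟩
  have h2 : k - 1 ≤ P'.width := (hno lf).trans hle
  have hkle : k ≤ Finset.univ.sup fun x : Fin P'.n => (P'.bag x).card := by
    unfold PathDecomp.width at h2
    omega
  haveI : Nonempty (Fin P'.n) := ⟨x0⟩
  obtain ⟨x1, -, hx1⟩ := Finset.exists_mem_eq_sup (Finset.univ)
    Finset.univ_nonempty (fun x : Fin P'.n => (P'.bag x).card)
  exact ⟨clamp x1, clamp_mem x1, by rw [hx1] at hkle; exact hkle⟩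
end LL

lemma prefix_snoc_or {α : Type*} {l m : List α} (h : l <+: m) :
    m = l ∨ ∃ a, l ++ [a] <+: m := by
  obtain ⟨t, rfl⟩ := h
  cases t with
  | nil => simp
  | cons a t' => exact Or.inr ⟨a, t', by simp⟩

section Occ
variable {s k : ℕ} {U : Type} [Fintype U] {G : LeafIdx s → SimpleGraph U}

def addr : (TreeVert s × Fin k) ⊕ (LeafIdx s × U) → List (Fin 3) :=
  Sum.elim (fun p => p.1.1) (fun p => p.1.1)

variable (P : PathDecomp (crossComposed s k G))

def occL (z : LeafIdx s → Fin P.n) (l : List (Fin 3)) (x : Fin P.n) : Prop :=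
  (∃ v : TreeVert s, l <+: v.1 ∧ x ∈ KF P v) ∨ (∃ lf : LeafIdx s, l <+: lf.1 ∧ x = z lf)

lemma occL_mono {z : LeafIdx s → Fin P.n} {l l' : List (Fin 3)} (h : l <+: l')
    {x : Fin P.n} (hx : occL P z l' x) : occL P z l x := by
  rcases hx with ⟨v, hpre, hv⟩ | ⟨lf, hpre, hlf⟩
  · exact Or.inl ⟨v, h.trans hpre, hv⟩
  · exact Or.inr ⟨lf, h.trans hpre, hlf⟩

lemma occL_convex (hk : 0 < k) (z : LeafIdx s → Fin P.n)
    (hz : ∀ lf : LeafIdx s, z lf ∈ KF P ⟨lf.1, le_of_eq lf.2⟩) :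
    ∀ d l, l.length + d = s → ∀ a b c : Fin P.n, a ≤ b → b ≤ c →
      occL P z l a → occL P z l c → occL P z l b := by
  intro d
  induction d with
  | zero =>
    intro l hl
    have hl' : l.length = s := by omega
    have key : ∀ x, occL P z l x ↔
        (x ∈ KF P ⟨l, le_of_eq hl'⟩ ∨ x = z ⟨l, hl'⟩) := by
      intro x
      constructor
      · rintro (⟨v, hpre, hx⟩ | ⟨lf, hpre, hx⟩)
        · have hvl : l = v.1 := hpre.eq_of_length
            (le_antisymm hpre.length_le (by have := v.2; omega))
        
          have : v = (⟨l, le_of_eq hl'⟩ : TreeVert s) := treevert_ext hvl.symm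
          rw [this] at hx
          exact Or.inl hx
        · have hvl : l = lf.1 := hpre.eq_of_length
            (le_antisymm hpre.length_le (by have := lf.2; omega))
          have : lf = (⟨l, hl'⟩ : LeafIdx s) := leafidx_ext hvl.symm
          rw [this] at hx
          exact Or.inr hx
      · rintro (hx | hx)
        · exact Or.inl ⟨⟨l, le_of_eq hl'⟩, List.prefix_rfl, hx⟩
        · exact Or.inr ⟨⟨l, hl'⟩, List.prefix_rfl, hx⟩
    intro a b c hab hbc ha hc
    refine (key b).mpr
      (convex_union (Q2 := fun x => x = z ⟨l, hl'⟩) (KF_convex P ⟨l, le_of_eq hl'⟩)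
        (fun a b c hab hbc ha hc => by
          rw [ha] at hab; rw [hc] at hbc; exact le_antisymm hbc hab)
        ⟨z ⟨l, hl'⟩, hz ⟨l, hl'⟩, rfl⟩ a b c hab hbc ((key a).mp ha) ((key c).mp hc))
  | succ d IH =>
    intro l hl
    have hls : l.length + 1 ≤ s := by omega
    set nl : TreeVert s := ⟨l, by omega⟩ with hnl
    have IH' : ∀ a : Fin 3, ∀ x y w : Fin P.n, x ≤ y → y ≤ w →
        occL P z (l ++ [a]) x → occL P z (l ++ [a]) w → occL P z (l ++ [a]) y :=
      fun a => IH (l ++ [a]) (by simp; omega)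
    have hmeet : ∀ a : Fin 3, ∃ p, p ∈ KF P nl ∧ occL P z (l ++ [a]) p := by
      intro a
      obtain ⟨p, h1, h2⟩ := KF_meet P hk (v := nl) (w := ⟨l ++ [a], by simp; omega⟩) rfl
      exact ⟨p, h1, Or.inl ⟨⟨l ++ [a], by simp; omega⟩, List.prefix_rfl, h2⟩⟩
    have key : ∀ x, occL P z l x ↔
        (((x ∈ KF P nl ∨ occL P z (l ++ [0]) x) ∨ occL P z (l ++ [1]) x) ∨
          occL P z (l ++ [2]) x) := by
      intro x
      constructor
      · rintro (⟨v, hpre, hx⟩ | ⟨lf, hpre, hx⟩)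
        · rcases prefix_snoc_or hpre with heq | ⟨a, ha⟩
          · have : v = nl := treevert_ext heq
            rw [this] at hx
            exact Or.inl (Or.inl (Or.inl hx))
          · have hocc : occL P z (l ++ [a]) x := Or.inl ⟨v, ha, hx⟩
            fin_cases a
            · exact Or.inl (Or.inl (Or.inr hocc))
            · exact Or.inl (Or.inr hocc)
            · exact Or.inr hocc
        · rcases prefix_snoc_or hpre with heq | ⟨a, ha⟩
          · exfalso
            have := lf.2
            rw [heq] at this
            omega
          · have hocc : occL P z (l ++ [a]) x := Or.inr ⟨lf, ha, hx⟩
            fin_cases a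
            · exact Or.inl (Or.inl (Or.inr hocc))
            · exact Or.inl (Or.inr hocc)
            · exact Or.inr hocc
      · rintro (((hx | hx) | hx) | hx)
        · exact Or.inl ⟨nl, List.prefix_rfl, hx⟩
        · exact occL_mono P (List.prefix_append l [0]) hx
        · exact occL_mono P (List.prefix_append l [1]) hx
        · exact occL_mono P (List.prefix_append l [2]) hx
    have C0 := convex_union (KF_convex P nl) (IH' 0) (hmeet 0)
    have C1 := convex_union C0 (IH' 1)
      ⟨(hmeet 1).choose, Or.inl (hmeet 1).choose_spec.1, (hmeet 1).choose_spec.2⟩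
    have C2 := convex_union C1 (IH' 2)
      ⟨(hmeet 2).choose, Or.inl (Or.inl (hmeet 2).choose_spec.1), (hmeet 2).choose_spec.2⟩
    intro a b c hab hbc ha hc
    exact (key b).mpr (C2 a b c hab hbc ((key a).mp ha) ((key c).mp hc))

end Occ


section MainClaim
variable {s k : ℕ} {U : Type} [Fintype U] {G : LeafIdx s → SimpleGraph U}
variable (P : PathDecomp (crossComposed s k G))

/-- Vertices of bag `x` whose address extends `l`. -/
noncomputable def BF (l : List (Fin 3)) (x : Fin P.n) :
    Finset ((TreeVert s × Fin k) ⊕ (LeafIdx s × U)) :=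
  @Finset.filter _ (fun w => l <+: addr w) (Classical.decPred _) (P.bag x)

lemma mem_BF {l : List (Fin 3)} {x : Fin P.n} {w} :
    w ∈ BF P l x ↔ w ∈ P.bag x ∧ l <+: addr w := by simp [BF]

lemma main_claim (hk : 2 ≤ k) (z : LeafIdx s → Fin P.n)
    (hz : ∀ lf : LeafIdx s, z lf ∈ KF P ⟨lf.1, le_of_eq lf.2⟩)
    (hz2 : ∀ lf : LeafIdx s, k ≤ (UF P lf (z lf)).card) :
    ∀ d l, l.length + d = s → ∃ x : Fin P.n, occL P z l x ∧
      k * (d + 2) ≤ (BF P l x).card := by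
  intro d
  induction d with
  | zero =>
    intro l hl
    have hl' : l.length = s := by omega
    set lfl : LeafIdx s := ⟨l, hl'⟩ with hlfl
    set nl : TreeVert s := ⟨l, le_of_eq hl'⟩ with hnl
    refine ⟨z lfl, Or.inr ⟨lfl, List.prefix_rfl, rfl⟩, ?_⟩
    classical
    set E1 : Finset ((TreeVert s × Fin k) ⊕ (LeafIdx s × U)) :=
      Finset.univ.image (fun j : Fin k => Sum.inl (nl, j)) with hE1
    set E2 : Finset ((TreeVert s × Fin k) ⊕ (LeafIdx s × U)) :=
      (UF P lfl (z lfl)).image (fun u => Sum.inr (lfl, u)) with hE2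
    have hsub : E1 ∪ E2 ⊆ BF P l (z lfl) := by
      intro w hw
      rcases Finset.mem_union.mp hw with hw | hw
      · obtain ⟨j, -, rfl⟩ := Finset.mem_image.mp hw
        exact (mem_BF P).mpr ⟨(mem_KF P).mp (hz lfl) j, List.prefix_rfl⟩
      · obtain ⟨u, hu, rfl⟩ := Finset.mem_image.mp hw
        exact (mem_BF P).mpr ⟨(mem_UF P).mp hu, List.prefix_rfl⟩
    have hdisj : Disjoint E1 E2 := by
      rw [Finset.disjoint_left]
      intro w hw1 hw2
      obtain ⟨j, -, rfl⟩ := Finset.mem_image.mp hw1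
      obtain ⟨u, -, h⟩ := Finset.mem_image.mp hw2
      exact absurd h (by simp)
    have hcard1 : E1.card = k := by
      rw [hE1, Finset.card_image_of_injective _ (fun a b h => by simpa using h)]
      simp
    have hcard2 : k ≤ E2.card := by
      rw [hE2, Finset.card_image_of_injective _ (fun a b h => by simpa using h)]
      exact hz2 lfl
    have := Finset.card_le_card hsub
    rw [Finset.card_union_of_disjoint hdisj] at this
    have hm : k * (0 + 2) = k + k := by ring
    omega
  | succ d IH =>
    intro l hl
    classical
    have H : ∀ a : Fin 3, ∃ x : Fin P.n, occL P z (l ++ [a]) x ∧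
        k * (d + 2) ≤ (BF P (l ++ [a]) x).card :=
      fun a => IH (l ++ [a]) (by simp; omega)
    choose x hx1 hx2 using H
    obtain ⟨a, b, e, hba, hea, hbe, hle1, hle2⟩ :
        ∃ a b e : Fin 3, b ≠ a ∧ e ≠ a ∧ b ≠ e ∧ x b ≤ x a ∧ x a ≤ x e := by
      rcases le_total (x 0) (x 1) with h | h
      · rcases le_total (x 1) (x 2) with h' | h'
        · exact ⟨1, 0, 2, by decide, by decide, by decide, h, h'⟩
        · rcases le_total (x 0) (x 2) with h'' | h''
          · exact ⟨2, 0, 1, by decide, by decide, by decide, h'', h'⟩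
          · exact ⟨0, 2, 1, by decide, by decide, by decide, h'', h⟩
      · rcases le_total (x 1) (x 2) with h' | h'
        · rcases le_total (x 0) (x 2) with h'' | h''
          · exact ⟨0, 1, 2, by decide, by decide, by decide, h, h''⟩
          · exact ⟨2, 1, 0, by decide, by decide, by decide, h', h''⟩
        · exact ⟨1, 2, 0, by decide, by decide, by decide, h', h⟩
    set nl : TreeVert s := ⟨l, by omega⟩ with hnl
    obtain ⟨p, hp⟩ := KF_nonempty P (by omega) nl
    have hbridge : occL P z (l ++ [b]) (x a) ∨ (x a) ∈ KF P nl ∨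
        occL P z (l ++ [e]) (x a) := by
      rcases le_total (x a) p with h | h
      · obtain ⟨pb, hpb1, hpb2⟩ :=
          KF_meet P (by omega) (v := nl) (w := ⟨l ++ [b], by simp; omega⟩) rfl
        have C := convex_union
          (Q1 := fun q => occL P z (l ++ [b]) q) (Q2 := fun q => q ∈ KF P nl)
          (occL_convex P (by omega) z hz d (l ++ [b]) (by simp; omega))
          (KF_convex P nl)
          ⟨pb, Or.inl ⟨⟨l ++ [b], by simp; omega⟩, List.prefix_rfl, hpb2⟩, hpb1⟩
        have := C (x b) (x a) p hle1 h (Or.inl (hx1 b)) (Or.inr hp)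
        tauto
      · obtain ⟨pe, hpe1, hpe2⟩ :=
          KF_meet P (by omega) (v := nl) (w := ⟨l ++ [e], by simp; omega⟩) rfl
        have C := convex_union
          (Q1 := fun q => q ∈ KF P nl) (Q2 := fun q => occL P z (l ++ [e]) q)
          (KF_convex P nl)
          (occL_convex P (by omega) z hz d (l ++ [e]) (by simp; omega))
          ⟨pe, hpe1, Or.inl ⟨⟨l ++ [e], by simp; omega⟩, List.prefix_rfl, hpe2⟩⟩
        have := C p (x a) (x e) h hle2 (Or.inl hp) (Or.inr (hx1 e))
        tauto
    -- from any of the three cases, produce k extra vertices at `x a`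
    have extra : ∃ E : Finset ((TreeVert s × Fin k) ⊕ (LeafIdx s × U)),
        (∀ w ∈ E, w ∈ P.bag (x a) ∧ l <+: addr w ∧ ¬ (l ++ [a] <+: addr w)) ∧
        k ≤ E.card := by
      have side : ∀ b' : Fin 3, b' ≠ a → occL P z (l ++ [b']) (x a) →
          ∃ E : Finset ((TreeVert s × Fin k) ⊕ (LeafIdx s × U)),
          (∀ w ∈ E, w ∈ P.bag (x a) ∧ l <+: addr w ∧ ¬ (l ++ [a] <+: addr w)) ∧
          k ≤ E.card := by
        rintro b' hb' (⟨v, hpre, hxv⟩ | ⟨lf, hpre, hxl⟩)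
        · refine ⟨Finset.univ.image (fun j : Fin k => Sum.inl (v, j)), ?_, ?_⟩
          · intro w hw
            obtain ⟨j, -, rfl⟩ := Finset.mem_image.mp hw
            refine ⟨(mem_KF P).mp hxv j, (List.prefix_append l [b']).trans hpre, ?_⟩
            intro hcon
            have heq : l ++ [b'] = l ++ [a] := by
              rcases List.prefix_or_prefix_of_prefix hpre hcon with h' | h'
              · exact h'.eq_of_length (by simp)
              · exact (h'.eq_of_length (by simp)).symm
            exact hb' (by simpa using heq)
          · rw [Finset.card_image_of_injective _ (fun a b h => by simpa using h)]
            simp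
        · refine ⟨(UF P lf (z lf)).image (fun u => Sum.inr (lf, u)), ?_, ?_⟩
          · intro w hw
            obtain ⟨u, hu, rfl⟩ := Finset.mem_image.mp hw
            refine ⟨by rw [hxl]; exact (mem_UF P).mp hu,
              (List.prefix_append l [b']).trans hpre, ?_⟩
            intro hcon
            have heq : l ++ [b'] = l ++ [a] := by
              rcases List.prefix_or_prefix_of_prefix hpre hcon with h' | h'
              · exact h'.eq_of_length (by simp)
              · exact (h'.eq_of_length (by simp)).symm
            exact hb' (by simpa using heq)
          · rw [Finset.card_image_of_injective _ (fun a b h => by simpa using h)]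
            exact hz2 lf
      rcases hbridge with h | h | h
      · exact side b hba h
      · refine ⟨Finset.univ.image (fun j : Fin k => Sum.inl (nl, j)), ?_, ?_⟩
        · intro w hw
          obtain ⟨j, -, rfl⟩ := Finset.mem_image.mp hw
          refine ⟨(mem_KF P).mp h j, List.prefix_rfl, ?_⟩
          intro hcon
          have := hcon.length_le
          simp [addr, hnl] at this
        · rw [Finset.card_image_of_injective _ (fun a b h => by simpa using h)]
          simp
      · exact side e hea h
    obtain ⟨E, hE, hEcard⟩ := extra
    have hsub : BF P (l ++ [a]) (x a) ∪ E ⊆ BF P l (x a) := by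
      intro w hw
      rcases Finset.mem_union.mp hw with hw | hw
      · obtain ⟨h1, h2⟩ := (mem_BF P).mp hw
        exact (mem_BF P).mpr ⟨h1, (List.prefix_append l [a]).trans h2⟩
      · exact (mem_BF P).mpr ⟨(hE w hw).1, (hE w hw).2.1⟩
    have hdisj : Disjoint (BF P (l ++ [a]) (x a)) E := by
      rw [Finset.disjoint_right]
      intro w hw hw2
      exact (hE w hw).2.2 ((mem_BF P).mp hw2).2
    have hco := Finset.card_le_card hsub
    rw [Finset.card_union_of_disjoint hdisj] at hco
    have hm : k * (d + 1 + 2) = k * (d + 2) + k := by ring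
    have := hx2 a
    exact ⟨x a, occL_mono P (List.prefix_append l [a]) (hx1 a), by omega⟩

lemma main_bound (hk : 2 ≤ k) (hno : ∀ i : LeafIdx s, k - 1 ≤ pathwidth (G i)) :
    k * (s + 2) ≤ Finset.univ.sup fun i : Fin P.n => (P.bag i).card := by
  classical
  choose z hz1 hz2 using fun lf => leaf_lemma P hk hno lf
  obtain ⟨x, -, hcard⟩ := main_claim P hk z hz1 hz2 s [] (by simp)
  calc k * (s + 2) ≤ (BF P [] x).card := hcard
  _ ≤ (P.bag x).card := Finset.card_le_card (fun w hw => ((mem_BF P).mp hw).1)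
  _ ≤ _ := Finset.le_sup (f := fun i : Fin P.n => (P.bag i).card) (Finset.mem_univ x)

end MainClaim


/-- If every input graph `G_i` has pathwidth at least `k − 1`, then the
cross-composed graph `G'` has pathwidth at least `k(s + 2) − 1`. -/
theorem crossComposed_pathwidth_ge (s k : ℕ) (hk : 2 ≤ k) {U : Type} [Fintype U]
    (G : LeafIdx s → SimpleGraph U)
    (hno : ∀ i : LeafIdx s, k - 1 ≤ pathwidth (G i)) :
    k * (s + 2) - 1 ≤ pathwidth (crossComposed s k G) := by
  classical
  have P0 : PathDecomp (crossComposed s k G) :=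
    { n := 1
      bag := fun _ => Finset.univ
      mem_bag := fun v => ⟨⟨0, by omega⟩, Finset.mem_univ v⟩
      adj_bag := fun u v _ => ⟨⟨0, by omega⟩, Finset.mem_univ u, Finset.mem_univ v⟩
      convex := fun v i j l _ _ _ _ => Finset.mem_univ v }
  refine le_csInf ⟨P0.width, P0, rfl⟩ ?_
  rintro w ⟨P, rfl⟩
  have := main_bound P hk hno
  unfold PathDecomp.width
  omega
end

section
/- If a path decomposition of a graph G has a bag X containing a clique S of G, then splicing a path decomposition P* of a disjoint graph H into copies of X (duplicating X and adding the bags of P* to consecutive copies) yields a valid path decomposition of the graph obtained from the disjoint union of G and H by joining all vertices of H to all vertices of S, of width at most the maximum of (width of original decomposition) and (|X| + maximum bag size of P* − 1). -/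
open SimpleGraph

/-- The graph obtained from the disjoint union of `G` and `H` by joining all
vertices of `H` to all vertices of `S ⊆ V(G)`. -/
def joinToClique {V W : Type*} (G : SimpleGraph V) (H : SimpleGraph W) (S : Finset V) :
    SimpleGraph (V ⊕ W) :=
  SimpleGraph.fromRel fun x y =>
    (∃ a b, x = Sum.inl a ∧ y = Sum.inl b ∧ G.Adj a b) ∨
    (∃ a b, x = Sum.inr a ∧ y = Sum.inr b ∧ H.Adj a b) ∨
    (∃ a b, x = Sum.inr a ∧ y = Sum.inl b ∧ b ∈ S)

/-- The index translation used in splicing. -/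
def spliceIdx (j n' i : ℕ) : ℕ :=
  if i < j then i else if i < j + n' then j else i - (n' - 1)

/-- Splicing a path decomposition `P'` of a disjoint graph `H` into the bag
`X = P.bag j` of a path decomposition `P` of `G`, where `X` contains a clique
`S`: duplicating `X` and adding the bags of `P'` to consecutive copies yields a
valid path decomposition of the graph obtained from `G ⊔ H` by joining `V(H)`
to `S`, of width at most `max (width P) (|X| + maxbag P' − 1)`. -/
theorem splice_path_decomposition {V W : Type*} [DecidableEq V] [DecidableEq W]
    (G : SimpleGraph V) (H : SimpleGraph W) (S : Finset V)
    (hclique : (S : Set V).Pairwise G.Adj)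
    (P : PathDecomp G) (j : Fin P.n) (hS : S ⊆ P.bag j)
    (P' : PathDecomp H) :
    ∀ bag : Fin (P.n + (P'.n - 1)) → Finset (V ⊕ W),
      (bag = fun i =>
        if h1 : i.1 < j.1 then
          (P.bag ⟨i.1, by have := i.isLt; have := j.isLt; omega⟩).image Sum.inl
        else if h2 : i.1 < j.1 + P'.n then
          (P.bag j).image Sum.inl ∪
            (P'.bag ⟨i.1 - j.1, by have := i.isLt; have := j.isLt; omega⟩).image Sum.inr
        else
          (P.bag ⟨i.1 - (P'.n - 1), by have := i.isLt; have := j.isLt; omega⟩).image Sum.inl) →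
      (∀ x : V ⊕ W, ∃ i, x ∈ bag i) ∧
      (∀ x y : V ⊕ W, (joinToClique G H S).Adj x y → ∃ i, x ∈ bag i ∧ y ∈ bag i) ∧
      (∀ (x : V ⊕ W) (i i' i'' : Fin (P.n + (P'.n - 1))), i ≤ i' → i' ≤ i'' →
          x ∈ bag i → x ∈ bag i'' → x ∈ bag i') ∧
      (∀ i, (bag i).card - 1 ≤
        max P.width
          ((P.bag j).card + (Finset.univ.sup fun i' => (P'.bag i').card) - 1)) := by
  intro bag hbag
  have hj := j.isLt
  have hF : ∀ i : Fin (P.n + (P'.n - 1)), spliceIdx j.1 P'.n i.1 < P.n := by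
    intro i
    have := i.isLt
    simp only [spliceIdx]
    split_ifs <;> omega
  -- helper to rewrite bags at equal indices
  have hPeq : ∀ (a : ℕ) (h : a < P.n) (b : Fin P.n), a = b.1 → P.bag ⟨a, h⟩ = P.bag b := by
    rintro a h b rfl; rfl
  have hP'eq : ∀ (a : ℕ) (h : a < P'.n) (b : Fin P'.n), a = b.1 → P'.bag ⟨a, h⟩ = P'.bag b := by
    rintro a h b rfl; rfl
  -- membership characterization for left vertices
  have hinl : ∀ (v : V) (i : Fin (P.n + (P'.n - 1))),
      Sum.inl v ∈ bag i ↔ v ∈ P.bag ⟨spliceIdx j.1 P'.n i.1, hF i⟩ := by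
    intro v i
    simp only [hbag, spliceIdx]
    split_ifs with h1 h2 <;> simp
  -- membership characterization for right vertices
  have hinr1 : ∀ (w : W) (i : Fin (P.n + (P'.n - 1))),
      Sum.inr w ∈ bag i → j.1 ≤ i.1 ∧ i.1 < j.1 + P'.n := by
    intro w i h
    simp only [hbag] at h
    split_ifs at h with h1 h2
    · simp at h
    · omega
    · simp at h
  have hinr2 : ∀ (w : W) (i : Fin (P.n + (P'.n - 1)))
      (h1 : j.1 ≤ i.1) (h2 : i.1 < j.1 + P'.n),
      Sum.inr w ∈ bag i ↔ w ∈ P'.bag ⟨i.1 - j.1, by omega⟩ := by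
    intro w i h1 h2
    simp only [hbag]
    rw [dif_neg (by omega), dif_pos h2]
    simp
  -- for every bag of P there is a spliced bag containing its image
  have hembed : ∀ i0 : Fin P.n, ∃ i : Fin (P.n + (P'.n - 1)),
      ∀ v, v ∈ P.bag i0 → Sum.inl v ∈ bag i := by
    intro i0
    have hi0 := i0.isLt
    by_cases h : i0.1 ≤ j.1
    · refine ⟨⟨i0.1, by omega⟩, fun v hv => ?_⟩
      rw [hinl]
      rw [hPeq _ _ i0 (by simp only [spliceIdx]; split_ifs <;> omega)]
      exact hv
    · refine ⟨⟨i0.1 + (P'.n - 1), by omega⟩, fun v hv => ?_⟩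
      rw [hinl]
      rw [hPeq _ _ i0 (by simp only [spliceIdx]; split_ifs <;> omega)]
      exact hv
  -- spliced bags for the middle part
  have hmid : ∀ k : Fin P'.n,
      ∃ i : Fin (P.n + (P'.n - 1)),
        (∀ w, w ∈ P'.bag k → Sum.inr w ∈ bag i) ∧
        (∀ v, v ∈ P.bag j → Sum.inl v ∈ bag i) := by
    intro k
    have hk := k.isLt
    refine ⟨⟨j.1 + k.1, by omega⟩, fun w hw => ?_, fun v hv => ?_⟩
    · rw [hinr2 w _ (show j.1 ≤ j.1 + k.1 by omega) (show j.1 + k.1 < j.1 + P'.n by omega)]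
      rw [hP'eq _ _ k (show j.1 + k.1 - j.1 = k.1 by omega)]
      exact hw
    · rw [hinl]
      rw [hPeq _ _ j (by simp only [spliceIdx]; split_ifs <;> omega)]
      exact hv
  refine ⟨?_, ?_, ?_, ?_⟩
  · -- vertex coverage
    rintro (v | w)
    · obtain ⟨i0, hi0⟩ := P.mem_bag v
      obtain ⟨i, hi⟩ := hembed i0
      exact ⟨i, hi v hi0⟩
    · obtain ⟨k, hk⟩ := P'.mem_bag w
      obtain ⟨i, hi, -⟩ := hmid k
      exact ⟨i, hi w hk⟩
  · -- edge coverage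
    have key : ∀ x y : V ⊕ W,
        ((∃ a b, x = Sum.inl a ∧ y = Sum.inl b ∧ G.Adj a b) ∨
         (∃ a b, x = Sum.inr a ∧ y = Sum.inr b ∧ H.Adj a b) ∨
         (∃ a b, x = Sum.inr a ∧ y = Sum.inl b ∧ b ∈ S)) →
        ∃ i, x ∈ bag i ∧ y ∈ bag i := by
      rintro x y (⟨a, b, rfl, rfl, hab⟩ | ⟨a, b, rfl, rfl, hab⟩ | ⟨a, b, rfl, rfl, hb⟩)
      · obtain ⟨i0, ha, hb⟩ := P.adj_bag a b hab
        obtain ⟨i, hi⟩ := hembed i0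
        exact ⟨i, hi a ha, hi b hb⟩
      · obtain ⟨k, ha, hb⟩ := P'.adj_bag a b hab
        obtain ⟨i, hi, -⟩ := hmid k
        exact ⟨i, hi a ha, hi b hb⟩
      · obtain ⟨k, hk⟩ := P'.mem_bag a
        obtain ⟨i, hi1, hi2⟩ := hmid k
        exact ⟨i, hi1 a hk, hi2 b (hS hb)⟩
    intro x y hadj
    rw [joinToClique, fromRel_adj] at hadj
    obtain ⟨-, h | h⟩ := hadj
    · exact key x y h
    · obtain ⟨i, h1, h2⟩ := key y x h
      exact ⟨i, h2, h1⟩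
  · -- convexity
    rintro (v | w) i i' i'' hle hle' hx hx''
    · rw [hinl] at hx hx'' ⊢
      refine P.convex v ⟨_, hF i⟩ ⟨_, hF i'⟩ ⟨_, hF i''⟩ ?_ ?_ hx hx''
      · simp only [Fin.mk_le_mk, spliceIdx]
        have := Fin.le_def.mp hle
        split_ifs <;> omega
      · simp only [Fin.mk_le_mk, spliceIdx]
        have := Fin.le_def.mp hle'
        split_ifs <;> omega
    · have hb1 := hinr1 w i hx
      have hb2 := hinr1 w i'' hx''
      have hle1 := Fin.le_def.mp hle
      have hle2 := Fin.le_def.mp hle'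
      have h1 : j.1 ≤ i'.1 := by omega
      have h2 : i'.1 < j.1 + P'.n := by omega
      rw [hinr2 w i hb1.1 hb1.2] at hx
      rw [hinr2 w i'' hb2.1 hb2.2] at hx''
      rw [hinr2 w i' h1 h2]
      exact P'.convex w ⟨i.1 - j.1, by omega⟩ ⟨i'.1 - j.1, by omega⟩ ⟨i''.1 - j.1, by omega⟩
        (by simp only [Fin.mk_le_mk]; omega) (by simp only [Fin.mk_le_mk]; omega) hx hx''
  · -- width bound
    intro i
    have hwidth : P.width = (Finset.univ.sup fun i => (P.bag i).card) - 1 := rfl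
    simp only [hbag]
    split_ifs with h1 h2
    · rw [Finset.card_image_of_injective _ Sum.inl_injective]
      refine le_max_of_le_left ?_
      rw [hwidth]
      exact Nat.sub_le_sub_right (Finset.le_sup (f := fun i => (P.bag i).card) (Finset.mem_univ _)) 1
    · refine le_max_of_le_right (Nat.sub_le_sub_right ?_ 1)
      calc ((P.bag j).image Sum.inl ∪ (P'.bag _).image Sum.inr).card
          ≤ ((P.bag j).image Sum.inl).card + ((P'.bag _).image Sum.inr).card :=
            Finset.card_union_le _ _
        _ ≤ (P.bag j).card + (Finset.univ.sup fun i' => (P'.bag i').card) := by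
            rw [Finset.card_image_of_injective _ Sum.inl_injective,
              Finset.card_image_of_injective _ Sum.inr_injective]
            exact Nat.add_le_add_left (Finset.le_sup (f := fun i' => (P'.bag i').card) (Finset.mem_univ _)) _
    · rw [Finset.card_image_of_injective _ Sum.inl_injective]
      refine le_max_of_le_left ?_
      rw [hwidth]
      exact Nat.sub_le_sub_right (Finset.le_sup (f := fun i => (P.bag i).card) (Finset.mem_univ _)) 1
end
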